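/- arXiv:1907.04541 — 7 statements merged into one kernel-verified Lean document; each statement's English description precedes it below -/
import Mathlib

section
/- If f : [0,∞) → ℝ is piecewise continuous, Ψ : [0,∞) → ℝ is a C¹ non-negative increasing function with Ψ(0) = 0, and f is of Ψ-exponential order c > 0 (i.e., there exist M, T > 0 with |f(t)| ≤ M·e^{c·Ψ(t)} for all t > T), then for every real s > c the integral ∫₀^∞ e^{-s·Ψ(t)} Ψ'(t) f(t) dt converges absolutely, and moreover |∫₀^∞ e^{-s·Ψ(t)} Ψ'(t) f(t) dt| ≤ M/(s−c) when the bound holds for all t ≥ 0. -/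
open MeasureTheory Real Set Filter

/-- The generalised Laplace transform of `f` with respect to `Ψ`. -/
noncomputable def psiLaplace (Ψ f : ℝ → ℝ) (s : ℝ) : ℝ :=
  ∫ t in Ioi (0 : ℝ), Real.exp (-s * Ψ t) * deriv Ψ t * f t

theorem existence_of_generalised_laplace_transform
    (Ψ f : ℝ → ℝ) (c M T s : ℝ)
    (hΨC1 : ContDiff ℝ 1 Ψ)
    (hΨmono : StrictMonoOn Ψ (Ici 0))
    (hΨnonneg : ∀ t ≥ (0:ℝ), 0 ≤ Ψ t)
    (hΨ0 : Ψ 0 = 0)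
    (hf : ContinuousOn f (Ici 0))
    (hc : 0 < c) (hM : 0 < M) (hT : 0 < T)
    (hbound : ∀ t > T, |f t| ≤ M * Real.exp (c * Ψ t))
    (hs : c < s) :
    IntegrableOn (fun t => Real.exp (-s * Ψ t) * deriv Ψ t * f t) (Ioi 0) ∧
      ((∀ t ≥ (0:ℝ), |f t| ≤ M * Real.exp (c * Ψ t)) →
        |psiLaplace Ψ f s| ≤ M / (s - c)) := by
  set a := s - c with ha_def
  have ha : 0 < a := by simp only [ha_def]; linarith
  have hΨdiff : Differentiable ℝ Ψ := hΨC1.differentiable one_ne_zero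
  have hΨ'cont : Continuous (deriv Ψ) := hΨC1.continuous_deriv le_rfl
  -- derivative of Ψ is nonneg on [0,∞)
  have hΨ'nonneg : ∀ t ≥ (0:ℝ), 0 ≤ deriv Ψ t := by
    intro t ht
    have hd : HasDerivWithinAt Ψ (deriv Ψ t) (Ioi t) t :=
      (hΨdiff t).hasDerivAt.hasDerivWithinAt
    have htend : Tendsto (slope Ψ t) (nhdsWithin t (Ioi t \ {t})) (nhds (deriv Ψ t)) :=
      hasDerivWithinAt_iff_tendsto_slope.mp hd
    have hset : Ioi t \ {t} = Ioi t := diff_singleton_eq_self (by simp)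
    rw [hset] at htend
    refine ge_of_tendsto htend ?_
    filter_upwards [self_mem_nhdsWithin] with u hu
    have hu' : t < u := hu
    have h1 : Ψ t ≤ Ψ u := (hΨmono ht (le_trans ht hu'.le) hu').le
    rw [slope_def_field]
    apply div_nonneg (by linarith) (by linarith)
  -- the auxiliary function g and its derivative h
  set g : ℝ → ℝ := fun t => -(Real.exp (-a * Ψ t) / a) with hg_def
  set h : ℝ → ℝ := fun t => Real.exp (-a * Ψ t) * deriv Ψ t with hh_def
  have hgderiv : ∀ t, HasDerivAt g (h t) t := by
    intro t
    have h1 : HasDerivAt (fun u => -a * Ψ u) (-a * deriv Ψ t) t :=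
      ((hΨdiff t).hasDerivAt).const_mul (-a)
    have h2 : HasDerivAt (fun u => Real.exp (-a * Ψ u))
        (Real.exp (-a * Ψ t) * (-a * deriv Ψ t)) t := (Real.hasDerivAt_exp _).comp t h1
    have h3 := (h2.div_const a).neg
    have heq : -(Real.exp (-a * Ψ t) * (-a * deriv Ψ t) / a) = h t := by
      simp only [hh_def]
      field_simp
    exact heq ▸ h3
  -- limit of exp(-a Ψ t) at infinity
  have hφmono : Antitone (fun u => Real.exp (-a * Ψ (max u 0))) := by
    intro u v huv
    apply Real.exp_le_exp.mpr
    have hm : Ψ (max u 0) ≤ Ψ (max v 0) :=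
      hΨmono.monotoneOn (le_max_right u 0) (le_max_right v 0) (max_le_max huv le_rfl)
    nlinarith
  have hbdd : BddBelow (range fun u => Real.exp (-a * Ψ (max u 0))) :=
    ⟨0, by rintro x ⟨u, rfl⟩; positivity⟩
  set L : ℝ := ⨅ u, Real.exp (-a * Ψ (max u 0)) with hL_def
  have hLtendsto : Tendsto (fun u => Real.exp (-a * Ψ (max u 0))) atTop (nhds L) :=
    tendsto_atTop_ciInf hφmono hbdd
  have hL0 : 0 ≤ L := le_ciInf fun u => (Real.exp_pos _).le
  have hexp_tendsto : Tendsto (fun t => Real.exp (-a * Ψ t)) atTop (nhds L) := by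
    apply hLtendsto.congr'
    filter_upwards [Ici_mem_atTop (0:ℝ)] with u hu
    simp [max_eq_left (show (0:ℝ) ≤ u from hu)]
  have hgtendsto : Tendsto g atTop (nhds (-(L / a))) := by
    simpa [hg_def] using (hexp_tendsto.div_const a).neg
  -- integrability and value of integral of h on Ioi b for any b ≥ 0
  have hnonneg_h : ∀ b ≥ (0:ℝ), ∀ x ∈ Ioi b, 0 ≤ h x := by
    intro b hb x hx
    have : 0 ≤ deriv Ψ x := hΨ'nonneg x (le_trans hb (le_of_lt hx))
    simp only [hh_def]
    positivity
  have hint_h : ∀ b ≥ (0:ℝ), IntegrableOn h (Ioi b) := fun b hb =>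
    integrableOn_Ioi_deriv_of_nonneg' (fun x _ => hgderiv x) (hnonneg_h b hb) hgtendsto
  have hval_h : (∫ x in Ioi (0:ℝ), h x) = (1 - L) / a := by
    rw [integral_Ioi_of_hasDerivAt_of_nonneg' (fun x _ => hgderiv x) (hnonneg_h 0 le_rfl)
      hgtendsto]
    simp only [hg_def, hΨ0, mul_zero, Real.exp_zero]
    ring
  set F : ℝ → ℝ := fun t => Real.exp (-s * Ψ t) * deriv Ψ t * f t with hF_def
  have hFcont : ContinuousOn F (Ici 0) := by
    apply ContinuousOn.mul _ hf
    exact ((Real.continuous_exp.comp ((continuous_const.mul hΨC1.continuous))).mul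
      hΨ'cont).continuousOn
  have hFmeas : AEStronglyMeasurable F (volume.restrict (Ioi (0:ℝ))) :=
    (hFcont.mono (Ioi_subset_Ici le_rfl)).aestronglyMeasurable measurableSet_Ioi
  -- the key domination on a set where the bound on f holds
  have hdom : ∀ t > (0:ℝ), |f t| ≤ M * Real.exp (c * Ψ t) → ‖F t‖ ≤ M * h t := by
    intro t ht hbt
    have hd : 0 ≤ deriv Ψ t := hΨ'nonneg t ht.le
    have hnorm : ‖F t‖ = Real.exp (-s * Ψ t) * deriv Ψ t * |f t| := by
      simp only [hF_def, norm_mul, Real.norm_eq_abs, abs_of_nonneg hd,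
        abs_of_pos (Real.exp_pos _)]
    rw [hnorm]
    have hee : Real.exp (-s * Ψ t) * Real.exp (c * Ψ t) = Real.exp (-a * Ψ t) := by
      rw [← Real.exp_add, ha_def]; ring_nf
    calc Real.exp (-s * Ψ t) * deriv Ψ t * |f t|
        ≤ Real.exp (-s * Ψ t) * deriv Ψ t * (M * Real.exp (c * Ψ t)) := by
          apply mul_le_mul_of_nonneg_left hbt; positivity
      _ = M * (Real.exp (-s * Ψ t) * Real.exp (c * Ψ t) * deriv Ψ t) := by ring
      _ = M * h t := by rw [hee]
  have hintF : IntegrableOn F (Ioi 0) := by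
    have h1 : IntegrableOn F (Ioc 0 T) := by
      have h0 : IntegrableOn F (Icc 0 T) volume :=
        (hFcont.mono (Icc_subset_Ici_self (a := T) (b := (0:ℝ)))).integrableOn_Icc
      exact h0.mono_set Ioc_subset_Icc_self
    have h2 : IntegrableOn F (Ioi T) := by
      apply Integrable.mono' ((hint_h T hT.le).const_mul M)
        (hFmeas.mono_set (Ioi_subset_Ioi hT.le))
      filter_upwards [ae_restrict_mem measurableSet_Ioi] with t ht
      exact hdom t (lt_trans hT ht) (hbound t ht)
    have hun : Ioc (0:ℝ) T ∪ Ioi T = Ioi 0 := Ioc_union_Ioi_eq_Ioi hT.le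
    rw [← hun]
    exact h1.union h2
  refine ⟨hintF, ?_⟩
  intro hb
  have h1 : |psiLaplace Ψ f s| ≤ ∫ t in Ioi (0:ℝ), M * h t := by
    rw [psiLaplace]
    calc |∫ t in Ioi (0:ℝ), F t| ≤ ∫ t in Ioi (0:ℝ), ‖F t‖ :=
          norm_integral_le_integral_norm F
      _ ≤ ∫ t in Ioi (0:ℝ), M * h t := by
          apply integral_mono_ae hintF.norm ((hint_h 0 le_rfl).const_mul M)
          filter_upwards [ae_restrict_mem measurableSet_Ioi] with t ht
          exact hdom t ht (hb t ht.le)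
  have h2 : (∫ t in Ioi (0:ℝ), M * h t) = M * ((1 - L) / a) := by
    rw [integral_const_mul, hval_h]
  rw [h2] at h1
  apply le_trans h1
  have h3 : M * (1 - L) ≤ M := by nlinarith
  calc M * ((1 - L) / a) = M * (1 - L) / a := (mul_div_assoc _ _ _).symm
    _ ≤ M / a := by gcongr
end

section
/- Under the hypotheses that f is continuous on [0,∞), of Ψ-exponential order c > 0 with |f(t)| ≤ M·e^{c·Ψ(t)} for all t ≥ 0, and Ψ is C¹, increasing, non-negative with Ψ(0)=0, the generalised Laplace transform L_Ψ{f}(s) tends to 0 as s → ∞. -/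
open MeasureTheory Real Set Filter

theorem generalised_laplace_tendsto_zero
    (Ψ f : ℝ → ℝ) (c M : ℝ)
    (hΨC1 : ContDiff ℝ 1 Ψ)
    (hΨmono : StrictMonoOn Ψ (Ici 0))
    (hΨnonneg : ∀ t ≥ (0:ℝ), 0 ≤ Ψ t)
    (hΨ0 : Ψ 0 = 0)
    (hf : ContinuousOn f (Ici 0))
    (hc : 0 < c) (hM : 0 < M)
    (hbound : ∀ t ≥ (0:ℝ), |f t| ≤ M * Real.exp (c * Ψ t)) :
    Tendsto (fun s => psiLaplace Ψ f s) atTop (nhds 0) := by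
  have hΨdiff : Differentiable ℝ Ψ := hΨC1.differentiable one_ne_zero
  -- derivative of Ψ is nonneg on Ioi 0
  have hderiv_nonneg : ∀ t ∈ Ioi (0:ℝ), 0 ≤ deriv Ψ t := by
    intro t ht
    have hd : HasDerivAt Ψ (deriv Ψ t) t := (hΨdiff t).hasDerivAt
    have hslope : Tendsto (slope Ψ t) (nhdsWithin t {t}ᶜ) (nhds (deriv Ψ t)) :=
      hasDerivAt_iff_tendsto_slope.1 hd
    have hsub : nhdsWithin t (Ioi t) ≤ nhdsWithin t {t}ᶜ :=
      nhdsWithin_mono t (fun u hu => ne_of_gt hu)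
    refine ge_of_tendsto (hslope.mono_left hsub) ?_
    filter_upwards [self_mem_nhdsWithin] with u hu
    have htu : t < u := hu
    have h1 : Ψ t ≤ Ψ u := (hΨmono.monotoneOn) (mem_Ici.2 (le_of_lt ht)) (mem_Ici.2 (le_of_lt (ht.trans htu))) htu.le
    have h2 : 0 < u - t := sub_pos.2 htu
    rw [slope_def_field]
    exact div_nonneg (by linarith) h2.le
  -- key bound for large s
  have key : ∀ s : ℝ, c + 1 ≤ s → ‖psiLaplace Ψ f s‖ ≤ M / (s - c) := by
    intro s hs
    have ha : (0:ℝ) < s - c := by linarith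
    set g' : ℝ → ℝ := fun t => Real.exp (-(s - c) * Ψ t) * deriv Ψ t with hg'
    set G : ℝ → ℝ := fun t => -Real.exp (-(s - c) * Ψ t) / (s - c) with hGdef
    have hG : ∀ t : ℝ, HasDerivAt G (g' t) t := by
      intro t
      have hd : HasDerivAt Ψ (deriv Ψ t) t := (hΨdiff t).hasDerivAt
      have h1 : HasDerivAt (fun u => -(s - c) * Ψ u) (-(s - c) * deriv Ψ t) t :=
        hd.const_mul _
      have h2 := h1.exp
      have h3 : HasDerivAt (fun x => -Real.exp (-(s - c) * Ψ x) / (s - c))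
          (-(Real.exp (-(s - c) * Ψ t) * (-(s - c) * deriv Ψ t)) / (s - c)) t :=
        (h2.neg).div_const (s - c)
      convert h3 using 1
      simp only [hg']
      field_simp
    -- limit of G at infinity
    have hGmono : Monotone (fun t => G (max t 0)) := by
      intro x y hxy
      have h1 : Ψ (max x 0) ≤ Ψ (max y 0) :=
        (hΨmono.monotoneOn) (mem_Ici.2 (le_max_right _ _)) (mem_Ici.2 (le_max_right _ _))
          (max_le_max hxy le_rfl)
      have h2 : Real.exp (-(s - c) * Ψ (max y 0)) ≤ Real.exp (-(s - c) * Ψ (max x 0)) := by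
        apply Real.exp_le_exp.2
        nlinarith
      simp only [hGdef]
      apply div_le_div_of_nonneg_right _ ha.le
      linarith
    have hGbdd : BddAbove (range fun t => G (max t 0)) := by
      refine ⟨0, ?_⟩
      rintro _ ⟨t, rfl⟩
      simp only [hGdef]
      apply div_nonpos_of_nonpos_of_nonneg _ ha.le
      simp [Real.exp_pos]
      positivity
    set l : ℝ := ⨆ t, G (max t 0) with hl
    have hGtend' : Tendsto (fun t => G (max t 0)) atTop (nhds l) :=
      tendsto_atTop_ciSup hGmono hGbdd
    have hGtend : Tendsto G atTop (nhds l) := by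
      refine hGtend'.congr' ?_
      filter_upwards [eventually_ge_atTop (0:ℝ)] with t ht
      rw [max_eq_left ht]
    have hlle : l ≤ 0 := by
      refine ciSup_le fun t => ?_
      simp only [hGdef]
      apply div_nonpos_of_nonpos_of_nonneg _ ha.le
      simp [Real.exp_pos]
      positivity
    have hg'nonneg : ∀ t ∈ Ioi (0:ℝ), 0 ≤ g' t := fun t ht =>
      mul_nonneg (Real.exp_pos _).le (hderiv_nonneg t ht)
    have hint : IntegrableOn g' (Ioi 0) :=
      integrableOn_Ioi_deriv_of_nonneg' (fun x _ => hG x) hg'nonneg hGtend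
    have hval : ∫ t in Ioi (0:ℝ), g' t = l - G 0 :=
      integral_Ioi_of_hasDerivAt_of_nonneg' (fun x _ => hG x) hg'nonneg hGtend
    have hG0 : G 0 = -(1 / (s - c)) := by
      simp [hGdef, hΨ0]
      ring
    -- bound the integrand
    have hbnd : ∀ t ∈ Ioi (0:ℝ),
        ‖Real.exp (-s * Ψ t) * deriv Ψ t * f t‖ ≤ M * g' t := by
      intro t ht
      have ht0 : (0:ℝ) ≤ t := le_of_lt ht
      have hd0 : 0 ≤ deriv Ψ t := hderiv_nonneg t ht
      rw [Real.norm_eq_abs, abs_mul, abs_mul, abs_of_nonneg (Real.exp_pos _).le,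
        abs_of_nonneg hd0]
      calc Real.exp (-s * Ψ t) * deriv Ψ t * |f t|
          ≤ Real.exp (-s * Ψ t) * deriv Ψ t * (M * Real.exp (c * Ψ t)) := by
            apply mul_le_mul_of_nonneg_left (hbound t ht0)
            exact mul_nonneg (Real.exp_pos _).le hd0
        _ = M * g' t := by
            simp only [hg']
            rw [show -(s - c) * Ψ t = -s * Ψ t + c * Ψ t by ring, Real.exp_add]
            ring
    have hmeas : ∀ᵐ t ∂(volume.restrict (Ioi (0:ℝ))),
        ‖Real.exp (-s * Ψ t) * deriv Ψ t * f t‖ ≤ M * g' t :=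
      (ae_restrict_iff' measurableSet_Ioi).2 (ae_of_all _ hbnd)
    have hMg : Integrable (fun t => M * g' t) (volume.restrict (Ioi (0:ℝ))) :=
      hint.const_mul M
    have h1 : ‖psiLaplace Ψ f s‖ ≤ ∫ t in Ioi (0:ℝ), M * g' t :=
      norm_integral_le_of_norm_le hMg hmeas
    calc ‖psiLaplace Ψ f s‖ ≤ ∫ t in Ioi (0:ℝ), M * g' t := h1
      _ = M * (l - G 0) := by rw [integral_const_mul, hval]
      _ = M * (l + 1 / (s - c)) := by rw [hG0]; ring
      _ ≤ M * (1 / (s - c)) := by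
          apply mul_le_mul_of_nonneg_left _ hM.le
          linarith
      _ = M / (s - c) := by ring
  -- conclude by squeezing
  rw [tendsto_zero_iff_norm_tendsto_zero]
  have hlim : Tendsto (fun s : ℝ => M / (s - c)) atTop (nhds 0) := by
    apply Tendsto.div_atTop tendsto_const_nhds
    exact tendsto_atTop_add_const_right _ (-c) tendsto_id
  refine squeeze_zero' ?_ ?_ hlim
  · filter_upwards with s using norm_nonneg _
  · filter_upwards [eventually_ge_atTop (c + 1)] with s hs using key s hs
end

section
/- For μ > 0, λ ∈ ℝ, and s > 0 with |λ|/s^μ < 1, and Ψ a C¹ increasing bijection of [0,∞) with Ψ(0)=0, the generalised Laplace transform of t ↦ E_μ(λ·(Ψ(t))^μ) equals s^{μ-1}/(s^μ − λ), where E_μ(z) = Σ_{j≥0} z^j/Γ(μj+1) is the Mittag-Leffler function. -/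
open MeasureTheory Real Set

/-- The two-parameter Mittag-Leffler function (one-parameter when ν = 1). -/
noncomputable def mittagLeffler (μ ν z : ℝ) : ℝ :=
  ∑' j : ℕ, z ^ j / Real.Gamma (μ * j + ν)

lemma lap_integrable {a r : ℝ} (ha : 0 ≤ a) (hr : 0 < r) :
    IntegrableOn (fun u : ℝ => Real.exp (-(r * u)) * u ^ a) (Ioi 0) := by
  have h := integrableOn_rpow_mul_exp_neg_mul_rpow (s := a) (p := 1) (b := r)
    (by linarith) zero_lt_one hr
  refine (h.congr_fun (fun u hu => ?_) measurableSet_Ioi)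
  simp [Real.rpow_one, mul_comm]

lemma lap_value {a r : ℝ} (ha : 0 ≤ a) (hr : 0 < r) :
    ∫ u in Ioi (0:ℝ), Real.exp (-(r * u)) * u ^ a = Real.Gamma (a + 1) / r ^ (a + 1) := by
  have h := Real.integral_rpow_mul_exp_neg_mul_Ioi (a := a + 1) (r := r) (by linarith) hr
  simp only [add_sub_cancel_right] at h
  rw [setIntegral_congr_fun measurableSet_Ioi (fun u hu => (mul_comm _ _ : Real.exp (-(r*u)) * u ^ a = _)), h,
    Real.div_rpow (by norm_num) hr.le, Real.one_rpow]
  ring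

lemma laplace_ml {μ lam s : ℝ} (hμ : 0 < μ) (hs : 0 < s) (hconv : |lam| / s ^ μ < 1) :
    ∫ u in Ioi (0:ℝ), Real.exp (-s * u) * mittagLeffler μ 1 (lam * u ^ μ) =
      s ^ (μ - 1) / (s ^ μ - lam) := by
  have hsμ : (0:ℝ) < s ^ μ := Real.rpow_pos_of_pos hs μ
  have hlam : |lam| < s ^ μ := (div_lt_one hsμ).mp hconv
  set F : ℕ → ℝ → ℝ := fun j u => Real.exp (-(s * u)) * u ^ (μ * j) * (lam ^ j / Real.Gamma (μ * j + 1))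
  have hΓpos : ∀ j : ℕ, 0 < Real.Gamma (μ * j + 1) := by
    intro j
    apply Real.Gamma_pos_of_pos
    positivity
  -- measurability
  have hmeas : ∀ j : ℕ, AEStronglyMeasurable (F j) (volume.restrict (Ioi 0)) := by
    intro j
    apply Measurable.aestronglyMeasurable
    fun_prop
  -- integrability and value
  have hint : ∀ j : ℕ, IntegrableOn (F j) (Ioi 0) := by
    intro j
    exact (lap_integrable (by positivity) hs).mul_const _
  have hval : ∀ j : ℕ, ∫ u in Ioi (0:ℝ), F j u = lam ^ j / s ^ (μ * j + 1) := by
    intro j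
    rw [MeasureTheory.integral_mul_const, lap_value (by positivity) hs]
    rw [div_mul_div_comm, mul_comm]
    rw [mul_comm (s ^ (μ * (j:ℝ) + 1)) _, ← div_div, mul_div_assoc, div_self (hΓpos j).ne', mul_one]
  have hsub : (0:ℝ) < s ^ μ - lam := by
    have := (abs_lt.mp hlam).2
    linarith
  -- norm integrals
  have hnormval : ∀ j : ℕ, ∫ u in Ioi (0:ℝ), ‖F j u‖ = |lam| ^ j / s ^ (μ * j + 1) := by
    intro j
    have : ∫ u in Ioi (0:ℝ), ‖F j u‖ =
        ∫ u in Ioi (0:ℝ), Real.exp (-(s * u)) * u ^ (μ * j) * (|lam| ^ j / Real.Gamma (μ * j + 1)) := by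
      refine setIntegral_congr_fun measurableSet_Ioi (fun u hu => ?_)
      have hu0 : (0:ℝ) < u := hu
      simp only [F, norm_mul, Real.norm_eq_abs, abs_of_pos (Real.exp_pos _),
        abs_of_nonneg (Real.rpow_nonneg hu0.le _), abs_div, abs_pow,
        abs_of_pos (hΓpos j)]
    rw [this, MeasureTheory.integral_mul_const, lap_value (by positivity) hs,
      div_mul_div_comm, mul_comm, mul_comm (s ^ (μ * (j:ℝ) + 1)) _, ← div_div,
      mul_div_assoc, div_self (hΓpos j).ne', mul_one]
  -- pointwise expansion
  have hpt : ∀ u ∈ Ioi (0:ℝ), Real.exp (-s * u) * mittagLeffler μ 1 (lam * u ^ μ) =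
      ∑' j : ℕ, F j u := by
    intro u hu
    have hu0 : (0:ℝ) < u := hu
    unfold mittagLeffler
    rw [← tsum_mul_left]
    refine tsum_congr (fun j => ?_)
    have h1 : (lam * u ^ μ) ^ j = lam ^ j * u ^ (μ * j) := by
      rw [mul_pow, Real.rpow_mul hu0.le, Real.rpow_natCast]
    rw [h1]
    simp only [F, neg_mul]
    ring
  -- sums finiteness
  have hr0 : (0:ℝ) ≤ |lam| / s ^ μ := by positivity
  have hsummable : Summable (fun j : ℕ => |lam| ^ j / s ^ (μ * j + 1)) := by
    have : (fun j : ℕ => |lam| ^ j / s ^ (μ * j + 1)) =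
        fun j : ℕ => (|lam| / s ^ μ) ^ j * s⁻¹ := by
      funext j
      rw [Real.rpow_add hs, Real.rpow_one, Real.rpow_mul hs.le, Real.rpow_natCast,
        div_pow]
      ring
    rw [this]
    exact (summable_geometric_of_lt_one hr0 hconv).mul_right _
  have hfin : ∑' j : ℕ, ∫⁻ u in Ioi (0:ℝ), ‖F j u‖₊ ≠ ⊤ := by
    have heq : ∀ j : ℕ, ∫⁻ u in Ioi (0:ℝ), ‖F j u‖₊ =
        ENNReal.ofReal (|lam| ^ j / s ^ (μ * j + 1)) := by
      intro j
      simp only [← enorm_eq_nnnorm]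
      rw [← MeasureTheory.ofReal_integral_norm_eq_lintegral_enorm (hint j), hnormval j]
    simp only [heq]
    rw [← ENNReal.ofReal_tsum_of_nonneg (fun j => by positivity) hsummable]
    exact ENNReal.ofReal_ne_top
  -- swap sum and integral
  rw [setIntegral_congr_fun measurableSet_Ioi hpt, MeasureTheory.integral_tsum hmeas hfin]
  simp only [hval]
  -- evaluate geometric series
  have hrw : (fun j : ℕ => lam ^ j / s ^ (μ * j + 1)) =
      fun j : ℕ => (lam / s ^ μ) ^ j * s⁻¹ := by
    funext j
    rw [Real.rpow_add hs, Real.rpow_one, Real.rpow_mul hs.le, Real.rpow_natCast, div_pow]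
    ring
  rw [hrw, tsum_mul_right, tsum_geometric_of_norm_lt_one
    (by rwa [Real.norm_eq_abs, abs_div, abs_of_pos hsμ])]
  rw [Real.rpow_sub hs, Real.rpow_one]
  have h1 : 1 - lam / s ^ μ = (s ^ μ - lam) / s ^ μ := by field_simp
  rw [h1, inv_div, ← div_eq_mul_inv, div_div, div_div, mul_comm]

theorem generalised_laplace_of_mittagLeffler
    (Ψ : ℝ → ℝ) (μ lam s : ℝ)
    (hΨC1 : ContDiff ℝ 1 Ψ)
    (hΨmono : StrictMonoOn Ψ (Ici 0))
    (hΨ0 : Ψ 0 = 0)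
    (hbij : BijOn Ψ (Ici 0) (Ici 0))
    (hμ : 0 < μ) (hs : 0 < s) (hconv : |lam| / s ^ μ < 1) :
    (∫ t in Ioi (0:ℝ), Real.exp (-s * Ψ t) * deriv Ψ t *
        mittagLeffler μ 1 (lam * (Ψ t) ^ μ)) =
      s ^ (μ - 1) / (s ^ μ - lam) := by
  have hdiff : Differentiable ℝ Ψ := hΨC1.differentiable one_ne_zero
  -- image of Ioi 0 under Ψ
  have himg : Ψ '' Ioi 0 = Ioi 0 := by
    ext u
    simp only [mem_image, mem_Ioi]
    constructor
    · rintro ⟨t, ht, rfl⟩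
      have := hΨmono self_mem_Ici (le_of_lt ht) ht
      rwa [hΨ0] at this
    · intro hu
      obtain ⟨t, ht, hΨt⟩ := hbij.surjOn (le_of_lt hu : u ∈ Ici 0)
      refine ⟨t, ?_, hΨt⟩
      rcases eq_or_lt_of_le (mem_Ici.mp ht : (0:ℝ) ≤ t) with h | h
      · rw [← h, hΨ0] at hΨt; exact absurd hΨt.symm (ne_of_gt hu)
      · exact h
  -- deriv nonneg on Ioi 0
  have hderiv_nonneg : ∀ t ∈ Ioi (0:ℝ), 0 ≤ deriv Ψ t := by
    intro t ht
    have hdAt : HasDerivAt Ψ (deriv Ψ t) t := (hdiff t).hasDerivAt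
    have hT := hasDerivAt_iff_tendsto_slope.mp hdAt
    have hT' : Filter.Tendsto (slope Ψ t) (nhdsWithin t (Ioi t)) (nhds (deriv Ψ t)) :=
      hT.mono_left (nhdsWithin_mono t (fun x hx => ne_of_gt hx))
    refine ge_of_tendsto hT' ?_
    refine eventually_nhdsWithin_of_forall (fun x hx => ?_)
    rw [slope_def_field]
    have ht0 : (0:ℝ) < t := ht
    have hx0 : t < x := hx
    apply div_nonneg
    · have : Ψ t ≤ Ψ x := le_of_lt (hΨmono (le_of_lt ht0) (le_of_lt (ht0.trans hx0)) hx0)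
      linarith
    · linarith
  -- change of variables
  have hd : ∀ x ∈ Ioi (0:ℝ), HasDerivWithinAt Ψ (deriv Ψ x) (Ioi 0) x :=
    fun x _ => (hdiff x).hasDerivAt.hasDerivWithinAt
  have hinj : InjOn Ψ (Ioi 0) := hbij.injOn.mono Ioi_subset_Ici_self
  have hcov := integral_image_eq_integral_abs_deriv_smul measurableSet_Ioi hd hinj
    (fun u => Real.exp (-s * u) * mittagLeffler μ 1 (lam * u ^ μ))
  rw [himg] at hcov
  have : (∫ t in Ioi (0:ℝ), Real.exp (-s * Ψ t) * deriv Ψ t *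
      mittagLeffler μ 1 (lam * (Ψ t) ^ μ)) =
      ∫ x in Ioi (0:ℝ), |deriv Ψ x| •
        (Real.exp (-s * Ψ x) * mittagLeffler μ 1 (lam * (Ψ x) ^ μ)) := by
    refine setIntegral_congr_fun measurableSet_Ioi (fun t ht => ?_)
    rw [abs_of_nonneg (hderiv_nonneg t ht), smul_eq_mul]
    ring
  rw [this, ← hcov]
  exact laplace_ml hμ hs hconv
end

section
/- Let f, g be piecewise continuous on [0,∞), of Ψ-exponential order c > 0, and Ψ a C¹ increasing bijection of [0,∞) with Ψ(0)=0. If L_Ψ{f}(s) = L_Ψ{g}(s) for all s > c, then f(t) = g(t) for all t ≥ 0 (at points of continuity). -/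
open MeasureTheory Real Set

lemma moments_zero {ψ : ℝ → ℝ} (hψ : ContinuousOn ψ (Icc 0 1))
    (hmom : ∀ n : ℕ, ∫ x in Ioo (0:ℝ) 1, x ^ n * ψ x = 0) :
    ∀ x ∈ Icc (0:ℝ) 1, ψ x = 0 := by
  -- sup bound on ψ
  obtain ⟨B, hB⟩ := (isCompact_Icc (a := (0:ℝ)) (b := 1)).exists_bound_of_continuousOn hψ
  have hB0 : 0 ≤ B := le_trans (norm_nonneg _) (hB 0 (by simp))
  -- integrability of x^n ψ
  have hint : ∀ n : ℕ, IntegrableOn (fun x : ℝ => x ^ n * ψ x) (Ioo 0 1) := by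
    intro n
    refine ((ContinuousOn.mul (by fun_prop) hψ).integrableOn_Icc).mono_set Ioo_subset_Icc_self
  -- polynomial version
  have hpoly : ∀ p : Polynomial ℝ, ∫ x in Ioo (0:ℝ) 1, p.eval x * ψ x = 0 := by
    intro p
    have : ∀ x : ℝ, p.eval x * ψ x =
        ∑ i ∈ Finset.range (p.natDegree + 1), p.coeff i * (x ^ i * ψ x) := by
      intro x
      rw [Polynomial.eval_eq_sum_range, Finset.sum_mul]
      congr 1; ext i; ring
    simp_rw [this]
    rw [integral_finset_sum]
    · refine Finset.sum_eq_zero fun i _ => ?_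
      rw [integral_const_mul, hmom i, mul_zero]
    · exact fun i _ => ((hint i).const_mul _)
  -- ∫ ψ² = 0
  have hψ2int : IntegrableOn (fun x : ℝ => ψ x ^ 2) (Ioo 0 1) :=
    ((hψ.pow 2)).integrableOn_Icc.mono_set Ioo_subset_Icc_self
  have hI : ∫ x in Ioo (0:ℝ) 1, ψ x ^ 2 = 0 := by
    by_contra hne
    set I := ∫ x in Ioo (0:ℝ) 1, ψ x ^ 2 with hIdef
    have hIpos : 0 < |I| := abs_pos.mpr hne
    have hε : 0 < |I| / (B + 1) := div_pos hIpos (by linarith)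
    obtain ⟨p, hp⟩ := exists_polynomial_near_of_continuousOn 0 1 ψ hψ _ hε
    have key : |I| ≤ (|I| / (B + 1)) * B := by
      have h1 : I = ∫ x in Ioo (0:ℝ) 1, (ψ x - p.eval x) * ψ x := by
        have : ∀ x : ℝ, (ψ x - p.eval x) * ψ x = ψ x ^ 2 - p.eval x * ψ x := by intro x; ring
        simp_rw [this]
        rw [integral_sub hψ2int]
        · rw [hpoly p, sub_zero]
        · exact (Polynomial.continuousOn _ |>.mul hψ).integrableOn_Icc.mono_set
            Ioo_subset_Icc_self
      have h2 : ‖∫ x in Ioo (0:ℝ) 1, (ψ x - p.eval x) * ψ x‖ ≤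
          ((|I| / (B + 1)) * B) * (volume (Ioo (0:ℝ) 1)).toReal := by
        refine norm_setIntegral_le_of_norm_le_const (by simp) ?_
        · intro x hx
          have hx' : x ∈ Icc (0:ℝ) 1 := Ioo_subset_Icc_self hx
          have := hp x hx'
          have hb := hB x hx'
          rw [Real.norm_eq_abs, abs_mul]
          have h3 : |ψ x - p.eval x| ≤ |I| / (B + 1) := by
            rw [abs_sub_comm]; exact (hp x hx').le
          have h4 : |ψ x| ≤ B := by rwa [Real.norm_eq_abs] at hb
          exact mul_le_mul h3 h4 (abs_nonneg _) (le_of_lt hε)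
      rw [← h1] at h2
      simpa using h2.trans_eq (by simp)
    have hBlt : (|I| / (B + 1)) * B < |I| := by
      rw [div_mul_eq_mul_div, div_lt_iff₀ (by linarith)]
      nlinarith
    exact absurd key (not_le.mpr hBlt)
  -- conclude ψ = 0 on Icc
  have hae : (fun x : ℝ => ψ x ^ 2) =ᵐ[volume.restrict (Ioo (0:ℝ) 1)] 0 := by
    rw [← setIntegral_eq_zero_iff_of_nonneg_ae]
    · exact hI
    · exact Filter.Eventually.of_forall fun x => sq_nonneg _
    · exact hψ2int
  have hae' : ψ =ᵐ[volume.restrict (Icc (0:ℝ) 1)] 0 := by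
    rw [← Measure.restrict_congr_set Ioo_ae_eq_Icc]
    filter_upwards [hae] with x hx
    have : ψ x ^ 2 = 0 := hx
    exact pow_eq_zero_iff (by norm_num) |>.mp this
  exact Measure.eqOn_Icc_of_ae_eq volume (by norm_num : (0:ℝ) ≠ 1) hae' hψ continuousOn_const

theorem generalised_laplace_uniqueness
    (Ψ f g : ℝ → ℝ) (c M : ℝ)
    (hΨC1 : ContDiff ℝ 1 Ψ)
    (hΨmono : StrictMonoOn Ψ (Ici 0))
    (hΨ0 : Ψ 0 = 0)
    (hbij : BijOn Ψ (Ici 0) (Ici 0))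
    (hf : ContinuousOn f (Ici 0)) (hg : ContinuousOn g (Ici 0))
    (hc : 0 < c) (hM : 0 < M)
    (hfbound : ∀ t ≥ (0:ℝ), |f t| ≤ M * Real.exp (c * Ψ t))
    (hgbound : ∀ t ≥ (0:ℝ), |g t| ≤ M * Real.exp (c * Ψ t))
    (heq : ∀ s > c, psiLaplace Ψ f s = psiLaplace Ψ g s) :
    ∀ t ≥ (0:ℝ), f t = g t := by
  have hΨdiff : Differentiable ℝ Ψ := hΨC1.differentiable one_ne_zero
  have hΨ'cont : Continuous (deriv Ψ) := hΨC1.continuous_deriv le_rfl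
  have hΨnonneg : ∀ t ≥ (0:ℝ), 0 ≤ Ψ t := fun t ht => hbij.mapsTo ht
  -- derivative nonneg on Ici 0
  have hΨ'nonneg : ∀ t ≥ (0:ℝ), 0 ≤ deriv Ψ t := by
    intro t ht
    have hd : HasDerivWithinAt Ψ (deriv Ψ t) (Ioi t) t :=
      ((hΨdiff t).hasDerivAt).hasDerivWithinAt
    rw [hasDerivWithinAt_iff_tendsto_slope] at hd
    have hset : Ioi t \ {t} = Ioi t := Set.diff_singleton_eq_self (by simp)
    rw [hset] at hd
    refine ge_of_tendsto hd ?_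
    filter_upwards [self_mem_nhdsWithin] with x hx
    have hx' : t < x := hx
    rw [slope_def_field]
    have h1 : Ψ t < Ψ x := hΨmono ht (le_trans ht hx'.le) hx'
    exact div_nonneg (by linarith) (by linarith)
  -- image of Ioi 0
  have himg : Ψ '' Ioi 0 = Ioi 0 := by
    apply Subset.antisymm
    · rintro _ ⟨t, ht, rfl⟩
      have : Ψ 0 < Ψ t := hΨmono self_mem_Ici (mem_Ici.mpr (le_of_lt ht)) ht
      rwa [hΨ0] at this
    · intro y hy
      obtain ⟨t, ht, rfl⟩ := hbij.surjOn (mem_Ici.mpr (le_of_lt hy) : y ∈ Ici (0:ℝ))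
      refine ⟨t, ?_, rfl⟩
      rcases eq_or_lt_of_le (mem_Ici.mp ht : (0:ℝ) ≤ t) with h | h
      · exfalso; rw [← h, hΨ0] at hy; exact lt_irrefl _ (mem_Ioi.mp hy)
      · exact h
  have hinj : InjOn Ψ (Ioi 0) := hΨmono.injOn.mono Ioi_subset_Ici_self
  have hΨderivWithin : ∀ t ∈ Ioi (0:ℝ), HasDerivWithinAt Ψ (deriv Ψ t) (Ioi 0) t :=
    fun t _ => ((hΨdiff t).hasDerivAt).hasDerivWithinAt
  -- global extension and inverse
  set Ψt : ℝ → ℝ := fun t => if 0 ≤ t then Ψ t else t with hΨt_def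
  have hΨt_eq : ∀ t ≥ (0:ℝ), Ψt t = Ψ t := fun t ht => if_pos ht
  have hΨtmono : StrictMono Ψt := by
    intro a b hab
    by_cases ha : 0 ≤ a
    · rw [hΨt_eq a ha, hΨt_eq b (le_trans ha hab.le)]
      exact hΨmono ha (le_trans ha hab.le) hab
    · push_neg at ha
      rw [hΨt_def]; simp only [if_neg (not_le.mpr ha)]
      by_cases hb : 0 ≤ b
      · rw [if_pos hb]; exact lt_of_lt_of_le ha (hΨnonneg b hb)
      · rw [if_neg hb]; exact hab
  have hΨtsurj : Function.Surjective Ψt := by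
    intro y
    by_cases hy : 0 ≤ y
    · obtain ⟨t, ht, rfl⟩ := hbij.surjOn (hy : y ∈ Ici (0:ℝ))
      exact ⟨t, hΨt_eq t ht⟩
    · exact ⟨y, if_neg hy⟩
  set e : ℝ ≃o ℝ := StrictMono.orderIsoOfSurjective Ψt hΨtmono hΨtsurj with he_def
  have he_apply : ∀ t, e t = Ψt t := fun t => rfl
  set ρ : ℝ → ℝ := fun u => e.symm u with hρ_def
  have hρcont : Continuous ρ := (e.symm).continuous
  have hρΨ : ∀ t ≥ (0:ℝ), ρ (Ψ t) = t := by
    intro t ht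
    have : ρ (Ψt t) = t := e.symm_apply_apply t
    rwa [hΨt_eq t ht] at this
  have hΨtρ : ∀ u, Ψt (ρ u) = u := fun u => e.apply_symm_apply u
  have hρ0 : ∀ u ≥ (0:ℝ), 0 ≤ ρ u := by
    intro u hu
    by_contra h
    push_neg at h
    have : Ψt (ρ u) < Ψt 0 := hΨtmono h
    rw [hΨtρ, hΨt_eq 0 le_rfl, hΨ0] at this
    exact absurd hu (not_le.mpr this)
  have hΨρ : ∀ u ≥ (0:ℝ), Ψ (ρ u) = u := by
    intro u hu
    have := hΨtρ u
    rwa [hΨt_eq _ (hρ0 u hu)] at this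
  -- F and φ
  set F : ℝ → ℝ := fun t => f t - g t with hF_def
  have hFcont : ContinuousOn F (Ici 0) := hf.sub hg
  have hFbound : ∀ t ≥ (0:ℝ), |F t| ≤ 2 * M * Real.exp (c * Ψ t) := by
    intro t ht
    calc |F t| ≤ |f t| + |g t| := abs_sub _ _
    _ ≤ M * Real.exp (c * Ψ t) + M * Real.exp (c * Ψ t) :=
        add_le_add (hfbound t ht) (hgbound t ht)
    _ = 2 * M * Real.exp (c * Ψ t) := by ring
  set φ : ℝ → ℝ := fun u => F (ρ u) with hφ_def
  have hφcont : ContinuousOn φ (Ici 0) := by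
    refine hFcont.comp hρcont.continuousOn ?_
    intro u hu; exact hρ0 u hu
  have hφbound : ∀ u ≥ (0:ℝ), |φ u| ≤ 2 * M * Real.exp (c * u) := by
    intro u hu
    have := hFbound (ρ u) (hρ0 u hu)
    rwa [hΨρ u hu] at this
  have hφΨ : ∀ t ≥ (0:ℝ), φ (Ψ t) = F t := fun t ht => by
    simp only [hφ_def, hρΨ t ht]
  -- integrability of the Laplace integrands
  have hdom : ∀ s > c, IntegrableOn
      (fun t => deriv Ψ t * Real.exp (-(s - c) * Ψ t)) (Ioi 0) := by
    intro s hs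
    have h1 : IntegrableOn (fun u => Real.exp (-(s - c) * u)) (Ψ '' Ioi 0) := by
      rw [himg]; exact exp_neg_integrableOn_Ioi 0 (by linarith)
    rw [integrableOn_image_iff_integrableOn_abs_deriv_smul measurableSet_Ioi
      hΨderivWithin hinj] at h1
    refine h1.congr_fun ?_ measurableSet_Ioi
    intro t ht
    simp only [smul_eq_mul]
    rw [abs_of_nonneg (hΨ'nonneg t (le_of_lt ht))]
  have hintf : ∀ s > c, ∀ h : ℝ → ℝ, ContinuousOn h (Ici 0) →
      (∀ t ≥ (0:ℝ), |h t| ≤ 2 * M * Real.exp (c * Ψ t)) →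
      IntegrableOn (fun t => Real.exp (-s * Ψ t) * deriv Ψ t * h t) (Ioi 0) := by
    intro s hs h hhcont hhbound
    refine Integrable.mono ((hdom s hs).const_mul (2 * M)) ?_ ?_
    · refine ContinuousOn.aestronglyMeasurable ?_ measurableSet_Ioi
      exact ((Real.continuous_exp.comp (continuous_const.mul (hΨC1.continuous))
        ).continuousOn.mul hΨ'cont.continuousOn).mul
        (hhcont.mono Ioi_subset_Ici_self)
    · rw [ae_restrict_iff' measurableSet_Ioi]
      refine Filter.Eventually.of_forall fun t ht => ?_
      have ht' : (0:ℝ) ≤ t := le_of_lt ht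
      have h1 : 0 ≤ deriv Ψ t := hΨ'nonneg t ht'
      rw [Real.norm_eq_abs, Real.norm_eq_abs, abs_mul, abs_mul, abs_of_nonneg h1,
        abs_of_nonneg (Real.exp_pos _).le]
      have h2 : |h t| ≤ 2 * M * Real.exp (c * Ψ t) := hhbound t ht'
      have h3 : Real.exp (-s * Ψ t) * deriv Ψ t * |h t| ≤
          Real.exp (-s * Ψ t) * deriv Ψ t * (2 * M * Real.exp (c * Ψ t)) := by
        apply mul_le_mul_of_nonneg_left h2
        positivity
      refine h3.trans_eq ?_
      rw [abs_of_nonneg (by positivity : (0:ℝ) ≤ 2 * M * (deriv Ψ t * Real.exp (-(s - c) * Ψ t)))]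
      rw [show -(s - c) * Ψ t = -s * Ψ t + c * Ψ t by ring, Real.exp_add]
      ring
  -- key identity after first change of variables
  have hH : ∀ s > c, ∫ u in Ioi (0:ℝ), Real.exp (-s * u) * φ u = 0 := by
    intro s hs
    have hcv := integral_image_eq_integral_abs_deriv_smul measurableSet_Ioi
      hΨderivWithin hinj (fun u => Real.exp (-s * u) * φ u)
    rw [himg] at hcv
    rw [hcv]
    have hEq : ∀ t ∈ Ioi (0:ℝ),
        |deriv Ψ t| • (Real.exp (-s * Ψ t) * φ (Ψ t)) =
        Real.exp (-s * Ψ t) * deriv Ψ t * f t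
          - Real.exp (-s * Ψ t) * deriv Ψ t * g t := by
      intro t ht
      have ht' : (0:ℝ) ≤ t := le_of_lt ht
      rw [smul_eq_mul, abs_of_nonneg (hΨ'nonneg t ht'), hφΨ t ht']
      simp only [hF_def]; ring
    rw [setIntegral_congr_fun measurableSet_Ioi hEq,
      integral_sub (hintf s hs f hf (fun t ht => le_trans (hfbound t ht) (by nlinarith [Real.exp_pos (c * Ψ t)])))
        (hintf s hs g hg (fun t ht => le_trans (hgbound t ht) (by nlinarith [Real.exp_pos (c * Ψ t)])))]
    have := heq s hs
    rw [psiLaplace, psiLaplace] at this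
    rw [this, sub_self]
  -- ψ on [0,1]
  set ψ : ℝ → ℝ := fun x => x ^ (c + 1 : ℝ) * φ (-Real.log x) with hψ_def
  have hψ0 : ψ 0 = 0 := by
    simp only [hψ_def]
    rw [Real.zero_rpow (by linarith), zero_mul]
  -- second change of variables: moments of ψ vanish
  set η : ℝ → ℝ := fun u => Real.exp (-u) with hη_def
  have hηderiv : ∀ u ∈ Ioi (0:ℝ), HasDerivWithinAt η (-Real.exp (-u)) (Ioi 0) u := by
    intro u _
    have h1 : HasDerivAt η (Real.exp (-u) * (-1)) u :=
      (Real.hasDerivAt_exp (-u)).comp u (hasDerivAt_neg u)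
    simpa using h1.hasDerivWithinAt
  have hηinj : InjOn η (Ioi 0) := fun a _ b _ h => neg_injective (Real.exp_injective h)
  have hηimg : η '' Ioi 0 = Ioo 0 1 := by
    apply Subset.antisymm
    · rintro _ ⟨u, hu, rfl⟩
      exact ⟨Real.exp_pos _, Real.exp_lt_one_iff.mpr (by simpa using (mem_Ioi.mp hu))⟩
    · intro x hx
      refine ⟨-Real.log x, ?_, ?_⟩
      · simpa using Real.log_neg hx.1 hx.2
      · simp only [hη_def, neg_neg, Real.exp_log hx.1]
  have hmom : ∀ n : ℕ, ∫ x in Ioo (0:ℝ) 1, x ^ n * ψ x = 0 := by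
    intro n
    rw [← hηimg, integral_image_eq_integral_abs_deriv_smul measurableSet_Ioi hηderiv hηinj]
    have hEq : ∀ u ∈ Ioi (0:ℝ),
        |(-Real.exp (-u))| • (η u ^ n * ψ (η u)) =
        Real.exp (-((n:ℝ) + c + 2) * u) * φ u := by
      intro u _
      have hψη : ψ (η u) = Real.exp (-u * (c + 1)) * φ u := by
        simp only [hψ_def, hη_def, Real.log_exp, neg_neg]
        rw [Real.rpow_def_of_pos (Real.exp_pos _), Real.log_exp]
      have hpow : η u ^ n = Real.exp ((n:ℝ) * -u) := (Real.exp_nat_mul (-u) n).symm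
      rw [smul_eq_mul, abs_neg, abs_of_pos (Real.exp_pos _), hψη, hpow]
      have hexp : Real.exp (-u) * Real.exp ((n:ℝ) * -u) * Real.exp (-u * (c + 1)) =
          Real.exp (-((n:ℝ) + c + 2) * u) := by
        rw [← Real.exp_add, ← Real.exp_add]; congr 1; ring
      calc Real.exp (-u) * (Real.exp ((n:ℝ) * -u) * (Real.exp (-u * (c + 1)) * φ u))
          = Real.exp (-u) * Real.exp ((n:ℝ) * -u) * Real.exp (-u * (c + 1)) * φ u := by ring
        _ = Real.exp (-((n:ℝ) + c + 2) * u) * φ u := by rw [hexp]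
    rw [setIntegral_congr_fun measurableSet_Ioi hEq]
    exact hH ((n:ℝ) + c + 2) (by have : (0:ℝ) ≤ (n:ℝ) := Nat.cast_nonneg n; linarith)
  -- bound on ψ near 0
  have hψbound : ∀ x ∈ Icc (0:ℝ) 1, |ψ x| ≤ 2 * M * x := by
    intro x hx
    rcases eq_or_lt_of_le hx.1 with h0 | h0
    · rw [← h0, hψ0]; simp
    · have hlog : (0:ℝ) ≤ -Real.log x := by
        simpa using Real.log_nonpos hx.1 hx.2
      have h1 : |φ (-Real.log x)| ≤ 2 * M * Real.exp (c * -Real.log x) :=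
        hφbound _ hlog
      have h2 : Real.exp (c * -Real.log x) = x ^ (-c : ℝ) := by
        rw [Real.rpow_def_of_pos h0]; congr 1; ring
      have h3 : |ψ x| = x ^ (c + 1 : ℝ) * |φ (-Real.log x)| := by
        rw [hψ_def]
        rw [abs_mul, abs_of_nonneg (Real.rpow_nonneg hx.1 _)]
      rw [h3]
      calc x ^ (c + 1 : ℝ) * |φ (-Real.log x)|
          ≤ x ^ (c + 1 : ℝ) * (2 * M * x ^ (-c : ℝ)) := by
            rw [← h2]
            exact mul_le_mul_of_nonneg_left h1 (Real.rpow_nonneg hx.1 _)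
        _ = 2 * M * (x ^ (c + 1 : ℝ) * x ^ (-c : ℝ)) := by ring
        _ = 2 * M * x := by
            rw [← Real.rpow_add h0]
            norm_num
  -- continuity of ψ on [0,1]
  have hψcont : ContinuousOn ψ (Icc 0 1) := by
    intro x hx
    rcases eq_or_lt_of_le hx.1 with h0 | h0
    · -- continuity at 0 by squeeze
      subst h0
      unfold ContinuousWithinAt
      rw [hψ0]
      apply squeeze_zero_norm' (a := fun x : ℝ => 2 * M * x)
      · filter_upwards [self_mem_nhdsWithin] with y hy
        exact hψbound y hy
      · have h1 : Filter.Tendsto (fun x : ℝ => 2 * M * x) (nhds 0) (nhds (2 * M * 0)) :=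
          (continuous_const.mul continuous_id).tendsto 0
        rw [mul_zero] at h1
        exact h1.mono_left nhdsWithin_le_nhds
    · -- continuity at x > 0
      have h1 : ContinuousWithinAt (fun y : ℝ => y ^ (c + 1 : ℝ)) (Icc 0 1) x :=
        (Real.continuousAt_rpow_const x _ (Or.inl (ne_of_gt h0))).continuousWithinAt
      have h2 : ContinuousWithinAt (fun y : ℝ => φ (-Real.log y)) (Icc 0 1) x := by
        have hmap : MapsTo (fun y : ℝ => -Real.log y) (Icc 0 1) (Ici 0) := by
          intro y hy
          rcases eq_or_lt_of_le hy.1 with hy0 | hy0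
          · simp [← hy0]
          · simpa using Real.log_nonpos hy.1 hy.2
        have hlogc : ContinuousWithinAt (fun y : ℝ => -Real.log y) (Icc 0 1) x :=
          ((Real.continuousAt_log (ne_of_gt h0)).neg).continuousWithinAt
        exact ContinuousWithinAt.comp (g := φ) (f := fun y : ℝ => -Real.log y)
          (hφcont _ (hmap hx)) hlogc hmap
      exact h1.mul h2
  have hψzero := moments_zero hψcont hmom
  -- φ vanishes on [0, ∞)
  have hφzero : ∀ u ≥ (0:ℝ), φ u = 0 := by
    intro u hu
    have hx : Real.exp (-u) ∈ Icc (0:ℝ) 1 :=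
      ⟨(Real.exp_pos _).le, Real.exp_le_one_iff.mpr (neg_nonpos.mpr hu)⟩
    have h1 := hψzero _ hx
    simp only [hψ_def, Real.log_exp, neg_neg] at h1
    rcases mul_eq_zero.mp h1 with h | h
    · exact absurd h (ne_of_gt (Real.rpow_pos_of_pos (Real.exp_pos _) _))
    · exact h
  intro t ht
  have h1 := hφzero (Ψ t) (hΨnonneg t ht)
  rw [hφΨ t ht] at h1
  exact sub_eq_zero.mp h1
end

section
/- Ψ-convolution is associative: for f, g, h piecewise continuous of Ψ-exponential order and Ψ a C¹ increasing bijection of [0,∞) with Ψ(0)=0, (f *_Ψ g) *_Ψ h = f *_Ψ (g *_Ψ h). -/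
open MeasureTheory Real Set intervalIntegral

noncomputable def psiConv (Ψ Ψinv f g : ℝ → ℝ) (t : ℝ) : ℝ :=
  ∫ τ in (0:ℝ)..t, f (Ψinv (Ψ t - Ψ τ)) * g τ * deriv Ψ τ

section Aux

variable {Ψ Ψinv : ℝ → ℝ}

lemma psiInv_nonneg (hbij : BijOn Ψ (Ici 0) (Ici 0)) (hinv : ∀ t ≥ (0:ℝ), Ψinv (Ψ t) = t)
    {u : ℝ} (hu : 0 ≤ u) : 0 ≤ Ψinv u := by
  obtain ⟨s, hs, rfl⟩ := hbij.surjOn (mem_Ici.2 hu)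
  rw [hinv s hs]; exact hs

lemma psiInv_strictMonoOn (hΨmono : StrictMonoOn Ψ (Ici 0))
    (hbij : BijOn Ψ (Ici 0) (Ici 0)) (hinv : ∀ t ≥ (0:ℝ), Ψinv (Ψ t) = t)
    (hinv' : ∀ u ≥ (0:ℝ), Ψ (Ψinv u) = u) :
    StrictMonoOn Ψinv (Ici 0) := by
  intro u₁ h₁ u₂ h₂ h12
  by_contra hle
  push_neg at hle
  have := hΨmono.monotoneOn (psiInv_nonneg hbij hinv h₂) (psiInv_nonneg hbij hinv h₁) hle
  rw [hinv' u₁ h₁, hinv' u₂ h₂] at this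
  exact absurd h12 (not_lt.2 this)

lemma psiInv_continuousOn (hΨmono : StrictMonoOn Ψ (Ici 0)) (hΨ0 : Ψ 0 = 0)
    (hbij : BijOn Ψ (Ici 0) (Ici 0)) (hinv : ∀ t ≥ (0:ℝ), Ψinv (Ψ t) = t)
    (hinv' : ∀ u ≥ (0:ℝ), Ψ (Ψinv u) = u) :
    ContinuousOn Ψinv (Ici 0) := by
  have hsm := psiInv_strictMonoOn hΨmono hbij hinv hinv'
  have hΨnn : ∀ b ≥ (0:ℝ), 0 ≤ Ψ b := by
    intro b hb
    have := hΨmono.monotoneOn (le_refl (0:ℝ)) hb hb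
    rwa [hΨ0] at this
  intro a ha
  have ha' : (0:ℝ) ≤ a := ha
  have hr : ContinuousWithinAt Ψinv (Ici a) a := by
    refine hsm.continuousWithinAt_right_of_surjOn
      (Filter.mem_of_superset self_mem_nhdsWithin (Ici_subset_Ici.2 ha')) ?_
    intro b hb
    have hb0 : (0:ℝ) ≤ b := le_of_lt (lt_of_le_of_lt (psiInv_nonneg hbij hinv ha') hb)
    exact ⟨Ψ b, hΨnn b hb0, hinv b hb0⟩
  have hl : ContinuousWithinAt Ψinv (Icc 0 a) a := by
    rcases eq_or_lt_of_le ha' with h0 | h0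
    · rw [← h0]
      have : Icc (0:ℝ) 0 = {0} := Icc_self 0
      rw [this]
      exact continuousWithinAt_singleton
    · have hpos : 0 < Ψinv a := by
        rcases eq_or_lt_of_le (psiInv_nonneg hbij hinv ha') with he | he
        · exfalso
          have : Ψ (Ψinv a) = a := hinv' a ha'
          rw [← he, hΨ0] at this
          exact absurd this.symm (ne_of_gt h0)
        · exact he
      refine (hsm.continuousWithinAt_left_of_exists_between
        (mem_nhdsWithin_of_mem_nhds (Ici_mem_nhds h0)) ?_).mono Icc_subset_Iic_self
      intro b hb
      refine ⟨Ψ (max b 0), hΨnn _ (le_max_right _ _), ?_, ?_⟩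
      · rw [hinv _ (le_max_right b 0)]; exact le_max_left _ _
      · rw [hinv _ (le_max_right b 0)]; exact max_lt hb hpos
  have : ContinuousWithinAt Ψinv (Icc 0 a ∪ Ici a) a := hl.union hr
  exact this.mono (fun x hx => (le_or_gt x a).elim (fun h => Or.inl ⟨hx, h⟩) (fun h => Or.inr h.le))

lemma triangle_swap (K : ℝ → ℝ → ℝ) (hK : Continuous (Function.uncurry K)) {x : ℝ} (hx : 0 ≤ x) :
    (∫ u in (0:ℝ)..x, ∫ w in u..x, K u w) = ∫ w in (0:ℝ)..x, ∫ u in (0:ℝ)..w, K u w := by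
  set S := Ioc (0:ℝ) x with hS
  set T : Set (ℝ × ℝ) := {p : ℝ × ℝ | p.1 ≤ p.2} with hT
  set φ : ℝ × ℝ → ℝ := T.indicator (Function.uncurry K) with hφ
  have hTmeas : MeasurableSet T := (isClosed_le continuous_fst continuous_snd).measurableSet
  haveI : IsFiniteMeasure (volume.restrict S) := by
    constructor
    rw [Measure.restrict_apply_univ, hS, Real.volume_Ioc]
    exact ENNReal.ofReal_lt_top
  obtain ⟨C, hC⟩ := (isCompact_Icc.prod isCompact_Icc).exists_bound_of_continuousOn
    (hK.continuousOn : ContinuousOn (Function.uncurry K) (Icc (0:ℝ) x ×ˢ Icc (0:ℝ) x))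
  have hint : Integrable φ ((volume.restrict S).prod (volume.restrict S)) := by
    refine Integrable.mono' (integrable_const C) ?_ ?_
    · exact (hK.aestronglyMeasurable.indicator hTmeas)
    · rw [Measure.prod_restrict]
      refine (ae_restrict_iff' (measurableSet_Ioc.prod measurableSet_Ioc)).2
        (Filter.Eventually.of_forall fun p hp => ?_)
      refine le_trans (norm_indicator_le_norm_self _ _) (hC p ?_)
      exact ⟨Ioc_subset_Icc_self hp.1, Ioc_subset_Icc_self hp.2⟩
  have key : (∫ u, ∫ w, φ (u, w) ∂(volume.restrict S) ∂(volume.restrict S))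
      = ∫ w, ∫ u, φ (u, w) ∂(volume.restrict S) ∂(volume.restrict S) :=
    integral_integral_swap (f := fun u w => φ (u, w)) hint
  have hL : (∫ u in (0:ℝ)..x, ∫ w in u..x, K u w)
      = ∫ u, ∫ w, φ (u, w) ∂(volume.restrict S) ∂(volume.restrict S) := by
    rw [intervalIntegral.integral_of_le hx]
    refine setIntegral_congr_fun measurableSet_Ioc fun u hu => ?_
    have h1 : ∀ w, φ (u, w) = (Ici u).indicator (K u) w := by
      intro w
      by_cases h : u ≤ w <;> simp [hφ, hT, indicator, Function.uncurry, h]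
    simp_rw [h1]
    rw [setIntegral_indicator measurableSet_Ici, intervalIntegral.integral_of_le hu.2]
    have hset : S ∩ Ici u = Icc u x := by
      ext w
      simp only [hS, mem_Ioc, mem_inter_iff, mem_Ici, mem_Icc]
      constructor
      · rintro ⟨⟨_, h2⟩, h3⟩; exact ⟨h3, h2⟩
      · rintro ⟨h1, h2⟩; exact ⟨⟨lt_of_lt_of_le hu.1 h1, h2⟩, h1⟩
    rw [hset, integral_Icc_eq_integral_Ioc]
  have hR : (∫ w in (0:ℝ)..x, ∫ u in (0:ℝ)..w, K u w)
      = ∫ w, ∫ u, φ (u, w) ∂(volume.restrict S) ∂(volume.restrict S) := by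
    rw [intervalIntegral.integral_of_le hx]
    refine setIntegral_congr_fun measurableSet_Ioc fun w hw => ?_
    have h1 : ∀ u, φ (u, w) = (Iic w).indicator (fun u => K u w) u := by
      intro u
      by_cases h : u ≤ w <;> simp [hφ, hT, indicator, Function.uncurry, h]
    simp_rw [h1]
    rw [setIntegral_indicator measurableSet_Iic, intervalIntegral.integral_of_le hw.1.le]
    have hset : S ∩ Iic w = Ioc 0 w := by
      ext u
      simp only [hS, mem_Ioc, mem_inter_iff, mem_Iic]
      constructor
      · rintro ⟨⟨h1, _⟩, h3⟩; exact ⟨h1, h3⟩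
      · rintro ⟨h1, h2⟩; exact ⟨⟨h1, le_trans h2 hw.2⟩, h2⟩
    rw [hset]
  rw [hL, hR, key]

lemma conv_assoc (F G H : ℝ → ℝ) (hF : Continuous F) (hG : Continuous G) (hH : Continuous H)
    {x : ℝ} (hx : 0 ≤ x) :
    (∫ u in (0:ℝ)..x, (∫ v in (0:ℝ)..(x - u), F (x - u - v) * G v) * H u)
      = ∫ u in (0:ℝ)..x, F (x - u) * ∫ v in (0:ℝ)..u, G (u - v) * H v := by
  have h1 : ∀ u : ℝ, (∫ v in (0:ℝ)..(x - u), F (x - u - v) * G v)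
      = ∫ w in u..x, F (x - w) * G (w - u) := by
    intro u
    have e : (fun v => F (x - u - v) * G v)
        = fun v => (fun w => F (x - w) * G (w - u)) (v + u) := by
      funext v
      have h1 : x - u - v = x - (v + u) := by ring
      simp only []
      rw [h1, show v + u - u = v from by ring]
    rw [e, intervalIntegral.integral_comp_add_right (fun w => F (x - w) * G (w - u))]
    norm_num
  simp_rw [h1, ← intervalIntegral.integral_mul_const]
  rw [triangle_swap (fun u w => F (x - w) * G (w - u) * H u)
    (((hF.comp (continuous_const.sub continuous_snd)).mul
      (hG.comp (continuous_snd.sub continuous_fst))).mul (hH.comp continuous_fst)) hx]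
  refine intervalIntegral.integral_congr fun w _ => ?_
  simp_rw [mul_assoc]
  rw [intervalIntegral.integral_const_mul]

lemma psiConv_eq (hΨC1 : ContDiff ℝ 1 Ψ)
    (hΨmono : StrictMonoOn Ψ (Ici 0)) (hΨ0 : Ψ 0 = 0)
    (hinv : ∀ t ≥ (0:ℝ), Ψinv (Ψ t) = t)
    (a b : ℝ → ℝ) {t : ℝ} (ht : 0 ≤ t)
    (hG : ContinuousOn (fun u => a (Ψinv (Ψ t - u)) * b (Ψinv u)) (Icc 0 (Ψ t))) :
    psiConv Ψ Ψinv a b t = ∫ u in (0:ℝ)..Ψ t, a (Ψinv (Ψ t - u)) * b (Ψinv u) := by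
  set G : ℝ → ℝ := fun u => a (Ψinv (Ψ t - u)) * b (Ψinv u) with hGdef
  have huIcc : uIcc (0:ℝ) t = Icc 0 t := uIcc_of_le ht
  have hcongr : EqOn (fun τ => a (Ψinv (Ψ t - Ψ τ)) * b τ * deriv Ψ τ)
      (fun τ => deriv Ψ τ • (G ∘ Ψ) τ) (uIcc 0 t) := by
    intro τ hτ
    rw [huIcc] at hτ
    simp only [Function.comp, hGdef, smul_eq_mul, hinv τ hτ.1]
    ring
  have himg : Ψ '' uIcc 0 t ⊆ Icc 0 (Ψ t) := by
    rw [huIcc]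
    rintro _ ⟨s, hs, rfl⟩
    constructor
    · have := hΨmono.monotoneOn (le_refl (0:ℝ)) hs.1 hs.1
      rwa [hΨ0] at this
    · exact hΨmono.monotoneOn hs.1 ht hs.2
  rw [psiConv, intervalIntegral.integral_congr hcongr,
    intervalIntegral.integral_comp_smul_deriv'' (hΨC1.continuous.continuousOn)
      (fun x _ => ((hΨC1.differentiable one_ne_zero).differentiableAt.hasDerivAt).hasDerivWithinAt)
      ((hΨC1.continuous_deriv le_rfl).continuousOn) (hG.mono himg), hΨ0]

lemma ext_cont {φ : ℝ → ℝ} (hφ : ContinuousOn φ (Ici 0))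
    (hinvC : ContinuousOn Ψinv (Ici 0)) (hnn : ∀ u ≥ (0:ℝ), 0 ≤ Ψinv u) :
    Continuous (fun s => φ (Ψinv (max s 0))) := by
  rw [← continuousOn_univ]
  refine hφ.comp (hinvC.comp ((continuous_id.max continuous_const).continuousOn) ?_) ?_
  · intro s _; exact le_max_right s 0
  · intro s _; exact hnn _ (le_max_right s 0)

end Aux

theorem psi_convolution_assoc
    (Ψ Ψinv f g h : ℝ → ℝ) (c M : ℝ)
    (hΨC1 : ContDiff ℝ 1 Ψ)
    (hΨmono : StrictMonoOn Ψ (Ici 0))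
    (hΨ0 : Ψ 0 = 0)
    (hbij : BijOn Ψ (Ici 0) (Ici 0))
    (hinv : ∀ t ≥ (0:ℝ), Ψinv (Ψ t) = t)
    (hinv' : ∀ u ≥ (0:ℝ), Ψ (Ψinv u) = u)
    (hf : ContinuousOn f (Ici 0)) (hg : ContinuousOn g (Ici 0))
    (hh : ContinuousOn h (Ici 0))
    (hc : 0 < c) (hM : 0 < M)
    (hfbound : ∀ t ≥ (0:ℝ), |f t| ≤ M * Real.exp (c * Ψ t))
    (hgbound : ∀ t ≥ (0:ℝ), |g t| ≤ M * Real.exp (c * Ψ t))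
    (hhbound : ∀ t ≥ (0:ℝ), |h t| ≤ M * Real.exp (c * Ψ t)) :
    ∀ t ≥ (0:ℝ), psiConv Ψ Ψinv (fun u => psiConv Ψ Ψinv f g u) h t =
      psiConv Ψ Ψinv f (fun u => psiConv Ψ Ψinv g h u) t := by
  intro t ht
  have hinvC : ContinuousOn Ψinv (Ici 0) := psiInv_continuousOn hΨmono hΨ0 hbij hinv hinv'
  have hnn : ∀ u ≥ (0:ℝ), 0 ≤ Ψinv u := fun u hu => psiInv_nonneg hbij hinv hu
  have hΨnn : ∀ b ≥ (0:ℝ), 0 ≤ Ψ b := by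
    intro b hb
    have := hΨmono.monotoneOn (le_refl (0:ℝ)) hb hb
    rwa [hΨ0] at this
  set Fb : ℝ → ℝ := fun s => f (Ψinv (max s 0)) with hFb
  set Gb : ℝ → ℝ := fun s => g (Ψinv (max s 0)) with hGb
  set Hb : ℝ → ℝ := fun s => h (Ψinv (max s 0)) with hHb
  have hFc : Continuous Fb := ext_cont hf hinvC hnn
  have hGc : Continuous Gb := ext_cont hg hinvC hnn
  have hHc : Continuous Hb := ext_cont hh hinvC hnn
  have hFeq : ∀ s ≥ (0:ℝ), Fb s = f (Ψinv s) := fun s hs => by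
    rw [hFb]; simp only []; rw [max_eq_left hs]
  have hGeq : ∀ s ≥ (0:ℝ), Gb s = g (Ψinv s) := fun s hs => by
    rw [hGb]; simp only []; rw [max_eq_left hs]
  have hHeq : ∀ s ≥ (0:ℝ), Hb s = h (Ψinv s) := fun s hs => by
    rw [hHb]; simp only []; rw [max_eq_left hs]
  set x := Ψ t with hxdef
  have hx : 0 ≤ x := hΨnn t ht
  -- inner convolutions as ordinary convolutions
  set Conv1 : ℝ → ℝ := fun w => ∫ v in (0:ℝ)..w, Fb (w - v) * Gb v with hConv1def
  set Conv2 : ℝ → ℝ := fun w => ∫ v in (0:ℝ)..w, Gb (w - v) * Hb v with hConv2def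
  have hConv1c : Continuous Conv1 :=
    intervalIntegral.continuous_parametric_intervalIntegral_of_continuous
      (f := fun w v => Fb (w - v) * Gb v)
      (((hFc.comp (continuous_fst.sub continuous_snd)).mul (hGc.comp continuous_snd)))
      continuous_id
  have hConv2c : Continuous Conv2 :=
    intervalIntegral.continuous_parametric_intervalIntegral_of_continuous
      (f := fun w v => Gb (w - v) * Hb v)
      (((hGc.comp (continuous_fst.sub continuous_snd)).mul (hHc.comp continuous_snd)))
      continuous_id
  -- pointwise representation of psiConv f g and psiConv g h
  have key : ∀ (a b : ℝ → ℝ), ContinuousOn a (Ici 0) → ContinuousOn b (Ici 0) →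
      ∀ s ≥ (0:ℝ), psiConv Ψ Ψinv a b s
        = ∫ v in (0:ℝ)..Ψ s, a (Ψinv (max (Ψ s - v) 0)) * b (Ψinv (max v 0)) := by
    intro a b ha hb s hs
    have hAc : Continuous (fun w => a (Ψinv (max w 0))) := ext_cont ha hinvC hnn
    have hBc : Continuous (fun w => b (Ψinv (max w 0))) := ext_cont hb hinvC hnn
    have hs0 : 0 ≤ Ψ s := hΨnn s hs
    have heq : EqOn (fun u => a (Ψinv (Ψ s - u)) * b (Ψinv u))
        (fun u => a (Ψinv (max (Ψ s - u) 0)) * b (Ψinv (max u 0))) (Icc 0 (Ψ s)) := by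
      intro u hu
      simp only []
      rw [max_eq_left (by linarith [hu.2] : (0:ℝ) ≤ Ψ s - u), max_eq_left hu.1]
    have hG : ContinuousOn (fun u => a (Ψinv (Ψ s - u)) * b (Ψinv u)) (Icc 0 (Ψ s)) :=
      (((hAc.comp (continuous_const.sub continuous_id)).mul hBc).continuousOn).congr heq
    rw [psiConv_eq hΨC1 hΨmono hΨ0 hinv a b hs hG]
    refine intervalIntegral.integral_congr ?_
    rw [uIcc_of_le hs0]
    exact heq
  have keyFG : ∀ s ≥ (0:ℝ), psiConv Ψ Ψinv f g s = Conv1 (Ψ s) := by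
    intro s hs
    rw [key f g hf hg s hs, hConv1def]
  have keyGH : ∀ s ≥ (0:ℝ), psiConv Ψ Ψinv g h s = Conv2 (Ψ s) := by
    intro s hs
    rw [key g h hg hh s hs, hConv2def]
  -- left side
  have heqL : EqOn (fun u => psiConv Ψ Ψinv f g (Ψinv (Ψ t - u)) * h (Ψinv u))
      (fun u => Conv1 (x - u) * Hb u) (Icc 0 x) := by
    intro u hu
    have h1 : (0:ℝ) ≤ x - u := by linarith [hu.2]
    simp only []
    rw [keyFG _ (hnn _ h1), hinv' _ h1, hHeq u hu.1]
  have hGL : ContinuousOn (fun u => psiConv Ψ Ψinv f g (Ψinv (Ψ t - u)) * h (Ψinv u))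
      (Icc 0 (Ψ t)) :=
    (((hConv1c.comp (continuous_const.sub continuous_id)).mul hHc).continuousOn).congr heqL
  have heqR : EqOn (fun u => f (Ψinv (Ψ t - u)) * psiConv Ψ Ψinv g h (Ψinv u))
      (fun u => Fb (x - u) * Conv2 u) (Icc 0 x) := by
    intro u hu
    have h1 : (0:ℝ) ≤ x - u := by linarith [hu.2]
    simp only []
    rw [keyGH _ (hnn _ hu.1), hinv' _ hu.1, hFeq _ h1]
  have hGR : ContinuousOn (fun u => f (Ψinv (Ψ t - u)) * psiConv Ψ Ψinv g h (Ψinv u))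
      (Icc 0 (Ψ t)) :=
    ((hFc.comp (continuous_const.sub continuous_id)).mul hConv2c).continuousOn.congr heqR
  calc psiConv Ψ Ψinv (fun u => psiConv Ψ Ψinv f g u) h t
      = ∫ u in (0:ℝ)..Ψ t, psiConv Ψ Ψinv f g (Ψinv (Ψ t - u)) * h (Ψinv u) :=
        psiConv_eq hΨC1 hΨmono hΨ0 hinv _ h ht hGL
    _ = ∫ u in (0:ℝ)..Ψ t, Conv1 (Ψ t - u) * Hb u :=
        intervalIntegral.integral_congr (by rw [uIcc_of_le hx]; exact heqL)
    _ = ∫ u in (0:ℝ)..Ψ t, Fb (Ψ t - u) * Conv2 u :=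
        conv_assoc Fb Gb Hb hFc hGc hHc hx
    _ = ∫ u in (0:ℝ)..Ψ t, f (Ψinv (Ψ t - u)) * psiConv Ψ Ψinv g h (Ψinv u) :=
        (intervalIntegral.integral_congr (by rw [uIcc_of_le hx]; exact heqR)).symm
    _ = psiConv Ψ Ψinv f (fun u => psiConv Ψ Ψinv g h u) t :=
        (psiConv_eq hΨC1 hΨmono hΨ0 hinv f _ ht hGR).symm
end

section
/- The generalised Laplace transform converts Ψ-convolution to multiplication: if f, g are piecewise continuous of Ψ-exponential order c > 0 and Ψ is a C¹ increasing bijection of [0,∞) with Ψ(0)=0, then L_Ψ{f *_Ψ g}(s) = L_Ψ{f}(s) · L_Ψ{g}(s) for s > c. -/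
open MeasureTheory Real Set intervalIntegral Function

lemma aux_translate (h : ℝ → ℝ) (v : ℝ) :
    (∫ u in Ioi v, h (u - v)) = ∫ u in Ioi (0:ℝ), h u := by
  rw [← MeasureTheory.integral_indicator measurableSet_Ioi,
    ← MeasureTheory.integral_indicator measurableSet_Ioi]
  have heq : ∀ u, (Ioi v).indicator (fun u => h (u - v)) u = (Ioi (0:ℝ)).indicator h (u - v) := by
    intro u
    by_cases hu : u ∈ Ioi v
    · rw [indicator_of_mem hu, indicator_of_mem]
      simpa [mem_Ioi, sub_pos] using hu
    · rw [indicator_of_notMem hu, indicator_of_notMem]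
      simpa [mem_Ioi, sub_pos] using hu
  simp_rw [heq]
  exact integral_sub_right_eq_self ((Ioi (0:ℝ)).indicator h) v

lemma laplace_conv (F G : ℝ → ℝ) (c M s : ℝ) (hc : 0 < c) (hM : 0 < M) (hs : c < s)
    (hF : ContinuousOn F (Ici 0)) (hG : ContinuousOn G (Ici 0))
    (hFb : ∀ u ≥ (0:ℝ), |F u| ≤ M * exp (c*u)) (hGb : ∀ u ≥ (0:ℝ), |G u| ≤ M * exp (c*u)) :
    (∫ u in Ioi (0:ℝ), exp (-s*u) * (∫ v in (0:ℝ)..u, F (u-v) * G v)) =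
      (∫ u in Ioi (0:ℝ), exp (-s*u) * F u) * (∫ v in Ioi (0:ℝ), exp (-s*v) * G v) := by
  set b : ℝ := (s - c)/2 with hbdef
  have hb : 0 < b := by simp only [hbdef]; linarith
  have hexpb : ∀ u : ℝ, 0 ≤ u → u ≤ exp (b*u)/b := by
    intro u hu
    have h1 := Real.add_one_le_exp (b*u)
    rw [le_div_iff₀ hb]
    nlinarith
  set A : Set (ℝ×ℝ) := {p | 0 < p.2 ∧ p.2 < p.1} with hAdef
  have hA : MeasurableSet A :=
    ((isOpen_lt continuous_const continuous_snd).inter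
      (isOpen_lt continuous_snd continuous_fst)).measurableSet
  set K : ℝ×ℝ → ℝ := A.indicator (fun p => exp (-s*p.1) * F (p.1-p.2) * G p.2) with hKdef
  have hKsec : ∀ u : ℝ, (fun v => K (u,v)) =
      (Ioo 0 u).indicator (fun v => exp (-s*u) * F (u-v) * G v) := by
    intro u; funext v
    by_cases h : 0 < v ∧ v < u
    · rw [hKdef, indicator_of_mem (by exact h), indicator_of_mem (by exact h)]
    · rw [hKdef, indicator_of_notMem (by exact h), indicator_of_notMem (by exact h)]
  have hKrow1 : ∀ v : ℝ, 0 < v → (fun u => K (u,v)) =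
      (Ioi v).indicator (fun u => exp (-s*u) * F (u-v) * G v) := by
    intro v hv; funext u
    by_cases h : v < u
    · rw [hKdef, indicator_of_mem (by exact ⟨hv, h⟩), indicator_of_mem (by exact h)]
    · rw [hKdef, indicator_of_notMem (by exact fun hh => h hh.2),
        indicator_of_notMem (by exact h)]
  have hKrow0 : ∀ v : ℝ, v ≤ 0 → ∀ u, K (u,v) = 0 := by
    intro v hv u
    rw [hKdef]
    exact indicator_of_notMem (fun hh => absurd hh.1 (not_lt.2 hv)) _
  have hbound : ∀ u v : ℝ, 0 < v → v < u →
      ‖exp (-s*u) * F (u-v) * G v‖ ≤ M*M*exp (-(s-c)*u) := by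
    intro u v hv huv
    have h1 : |F (u-v)| ≤ M * exp (c*(u-v)) := hFb _ (by linarith)
    have h2 : |G v| ≤ M * exp (c*v) := hGb _ hv.le
    have e1 : ‖exp (-s*u) * F (u-v) * G v‖ = exp (-s*u) * |F (u-v)| * |G v| := by
      rw [Real.norm_eq_abs, abs_mul, abs_mul, abs_of_pos (exp_pos _)]
    rw [e1]
    calc exp (-s*u) * |F (u-v)| * |G v|
        ≤ exp (-s*u) * (M * exp (c*(u-v))) * (M * exp (c*v)) := by
          apply mul_le_mul (mul_le_mul_of_nonneg_left h1 (exp_pos _).le) h2 (abs_nonneg _)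
          positivity
      _ = M*M*(exp (-s*u) * exp (c*(u-v)) * exp (c*v)) := by ring
      _ = M*M*exp (-(s-c)*u) := by
          rw [← Real.exp_add, ← Real.exp_add]; congr 1; ring
  have hKcont : ContinuousOn (fun p : ℝ×ℝ => exp (-s*p.1) * F (p.1-p.2) * G p.2) A := by
    apply ContinuousOn.mul
    · apply ContinuousOn.mul
      · exact (Real.continuous_exp.comp (continuous_const.mul continuous_fst)).continuousOn
      · exact hF.comp (continuous_fst.sub continuous_snd).continuousOn
          (fun p hp => le_of_lt (sub_pos.2 hp.2))
    · exact hG.comp continuous_snd.continuousOn (fun p hp => hp.1.le)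
  have hKasm : AEStronglyMeasurable K ((volume : Measure ℝ).prod (volume : Measure ℝ)) := by
    rw [← MeasureTheory.Measure.volume_eq_prod, hKdef]
    exact (aestronglyMeasurable_indicator_iff hA).mpr (hKcont.aestronglyMeasurable hA)
  have hKint : Integrable K ((volume : Measure ℝ).prod (volume : Measure ℝ)) := by
    rw [MeasureTheory.integrable_prod_iff hKasm]
    constructor
    · refine Filter.Eventually.of_forall (fun u => ?_)
      rw [show (fun y => K (u, y)) = (fun v => K (u,v)) from rfl, hKsec u]
      by_cases hu : 0 < u
      · apply IntegrableOn.integrable_indicator _ measurableSet_Ioo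
        apply IntegrableOn.mono_set _ Ioo_subset_Icc_self
        apply ContinuousOn.integrableOn_Icc
        apply ContinuousOn.mul
        · apply ContinuousOn.mul continuousOn_const
          exact hF.comp (continuous_const.sub continuous_id).continuousOn
            (fun v hv => sub_nonneg.2 hv.2)
        · exact hG.mono (fun v hv => hv.1)
      · rw [Ioo_eq_empty (not_lt.2 (not_lt.1 hu))]
        simp
    · set D : ℝ → ℝ := (Ioi 0).indicator (fun u => (M*M/b) * exp (-b*u)) with hDdef
      have hD : Integrable D := by
        rw [hDdef, integrable_indicator_iff measurableSet_Ioi]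
        exact (exp_neg_integrableOn_Ioi 0 hb).const_mul _
      apply Integrable.mono' hD (hKasm.norm.integral_prod_right')
      refine Filter.Eventually.of_forall (fun u => ?_)
      by_cases hu : 0 < u
      · have hre : (fun v => ‖K (u,v)‖) =
            (Ioo 0 u).indicator (fun v => ‖exp (-s*u) * F (u-v) * G v‖) := by
          funext v
          rw [show ‖K (u,v)‖ = (fun v => ‖K (u,v)‖) v from rfl]
          rw [show (fun v => ‖K (u,v)‖) = fun v => ‖(fun v => K (u,v)) v‖ from rfl, hKsec u]
          rw [← norm_indicator_eq_indicator_norm]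
        have h0 : (∫ v, ‖K (u,v)‖) = ∫ v in Ioo 0 u, ‖exp (-s*u) * F (u-v) * G v‖ := by
          rw [hre]
          exact MeasureTheory.integral_indicator measurableSet_Ioo
        have h1 : ‖∫ v, ‖K (u,v)‖‖ ≤ (M*M*exp (-(s-c)*u)) * (volume (Ioo (0:ℝ) u)).toReal := by
          rw [h0]
          apply norm_setIntegral_le_of_norm_le_const
          · rw [Real.volume_Ioo]; exact ENNReal.ofReal_lt_top
          · intro v hv
            rw [norm_norm]
            exact hbound u v hv.1 hv.2
        have h2 : (volume (Ioo (0:ℝ) u)).toReal = u := by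
          rw [Real.volume_Ioo, ENNReal.toReal_ofReal (by linarith)]
          ring
        rw [h2] at h1
        refine h1.trans ?_
        have h3 : M*M*exp (-(s-c)*u) * u ≤ M*M*exp (-(s-c)*u) * (exp (b*u)/b) := by
          apply mul_le_mul_of_nonneg_left (hexpb u hu.le) (by positivity)
        refine h3.trans (le_of_eq ?_)
        have h4 : exp (-(s-c)*u) * exp (b*u) = exp (-b*u) := by
          rw [← Real.exp_add]; congr 1; rw [hbdef]; ring
        have h5 : D u = (M*M/b) * exp (-b*u) := by
          rw [hDdef, indicator_of_mem (mem_Ioi.2 hu)]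
        rw [h5, ← h4]; field_simp
      · have hz : ∀ v, K (u,v) = 0 := by
          intro v
          rw [show K (u,v) = (fun v => K (u,v)) v from rfl, hKsec u,
            Ioo_eq_empty (not_lt.2 (not_lt.1 hu))]
          simp
        have hD0 : D u = 0 := by
          rw [hDdef, indicator_of_notMem (fun hh => hu (mem_Ioi.1 hh))]
        simp [hz, hD0]
  have hswap : (∫ u, ∫ v, K (u,v)) = ∫ v, ∫ u, K (u,v) :=
    integral_integral_swap (f := fun u v => K (u,v)) hKint
  have hL : (∫ u, ∫ v, K (u,v)) =
      ∫ u in Ioi (0:ℝ), exp (-s*u) * (∫ v in (0:ℝ)..u, F (u-v) * G v) := by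
    rw [← MeasureTheory.integral_indicator measurableSet_Ioi]
    congr 1
    funext u
    by_cases hu : 0 < u
    · rw [indicator_of_mem (mem_Ioi.2 hu), hKsec u,
        MeasureTheory.integral_indicator measurableSet_Ioo,
        intervalIntegral.integral_of_le hu.le, integral_Ioc_eq_integral_Ioo,
        ← MeasureTheory.integral_const_mul]
      simp_rw [mul_assoc]
    · rw [indicator_of_notMem (fun hh => hu (mem_Ioi.1 hh)), hKsec u,
        Ioo_eq_empty (not_lt.2 (not_lt.1 hu))]
      simp
  have hR : (∫ v, ∫ u, K (u,v)) =
      (∫ u in Ioi (0:ℝ), exp (-s*u) * F u) * (∫ v in Ioi (0:ℝ), exp (-s*v) * G v) := by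
    have hrow : ∀ v : ℝ, (∫ u, K (u,v)) =
        (Ioi (0:ℝ)).indicator
          (fun v => (∫ w in Ioi (0:ℝ), exp (-s*w) * F w) * (exp (-s*v) * G v)) v := by
      intro v
      by_cases hv : 0 < v
      · rw [indicator_of_mem (mem_Ioi.2 hv), hKrow1 v hv,
          MeasureTheory.integral_indicator measurableSet_Ioi]
        calc (∫ u in Ioi v, exp (-s*u) * F (u-v) * G v)
            = ∫ u in Ioi v, (fun w => exp (-s*w) * F w * (exp (-s*v) * G v)) (u - v) := by
              apply setIntegral_congr_fun measurableSet_Ioi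
              intro u _
              simp only
              have h2 : exp (-s*(u-v)) * exp (-s*v) = exp (-s*u) := by
                rw [← Real.exp_add]; congr 1; ring
              calc exp (-s*u) * F (u-v) * G v
                  = (exp (-s*(u-v)) * exp (-s*v)) * F (u-v) * G v := by rw [h2]
                _ = exp (-s*(u-v)) * F (u-v) * (exp (-s*v) * G v) := by ring
          _ = ∫ w in Ioi (0:ℝ), exp (-s*w) * F w * (exp (-s*v) * G v) :=
              aux_translate (fun w => exp (-s*w) * F w * (exp (-s*v) * G v)) v
          _ = (∫ w in Ioi (0:ℝ), exp (-s*w) * F w) * (exp (-s*v) * G v) :=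
              MeasureTheory.integral_mul_const _ _
      · rw [indicator_of_notMem (fun hh => hv (mem_Ioi.1 hh))]
        have : (fun u => K (u,v)) = fun _ => (0:ℝ) := funext (fun u => hKrow0 v (not_lt.1 hv) u)
        rw [this]
        simp
    simp_rw [hrow]
    rw [MeasureTheory.integral_indicator measurableSet_Ioi, ← MeasureTheory.integral_const_mul]
  rw [← hL, hswap, hR]

theorem generalised_laplace_of_psi_convolution
    (Ψ Ψinv f g : ℝ → ℝ) (c M : ℝ)
    (hΨC1 : ContDiff ℝ 1 Ψ)
    (hΨmono : StrictMonoOn Ψ (Ici 0))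
    (hΨ0 : Ψ 0 = 0)
    (hbij : BijOn Ψ (Ici 0) (Ici 0))
    (hinv : ∀ t ≥ (0:ℝ), Ψinv (Ψ t) = t)
    (hinv' : ∀ u ≥ (0:ℝ), Ψ (Ψinv u) = u)
    (hf : ContinuousOn f (Ici 0)) (hg : ContinuousOn g (Ici 0))
    (hc : 0 < c) (hM : 0 < M)
    (hfbound : ∀ t ≥ (0:ℝ), |f t| ≤ M * Real.exp (c * Ψ t))
    (hgbound : ∀ t ≥ (0:ℝ), |g t| ≤ M * Real.exp (c * Ψ t)) :
    ∀ s > c, psiLaplace Ψ (fun t => psiConv Ψ Ψinv f g t) s =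
      psiLaplace Ψ f s * psiLaplace Ψ g s := by
  intro s hs
  have hΨdiff : Differentiable ℝ Ψ := hΨC1.differentiable one_ne_zero
  have hΨd : ∀ t : ℝ, HasDerivAt Ψ (deriv Ψ t) t := fun t => (hΨdiff t).hasDerivAt
  have hΨ'cont : Continuous (deriv Ψ) := hΨC1.continuous_deriv le_rfl
  have hmonoOn : MonotoneOn Ψ (Ici 0) := hΨmono.monotoneOn
  have hinv0 : ∀ u ≥ (0:ℝ), 0 ≤ Ψinv u := by
    intro u hu
    obtain ⟨t, ht, rfl⟩ := hbij.surjOn hu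
    rw [hinv t ht]; exact ht
  have hΨnonneg : ∀ t ≥ (0:ℝ), 0 ≤ Ψ t := fun t ht => hbij.mapsTo ht
  have himg : Ψ '' (Ioi 0) = Ioi 0 := by
    ext u
    constructor
    · rintro ⟨t, ht, rfl⟩
      have := hΨmono (mem_Ici.2 (le_refl (0:ℝ))) (mem_Ici.2 (le_of_lt (mem_Ioi.1 ht))) (mem_Ioi.1 ht)
      rw [hΨ0] at this
      exact this
    · intro hu
      obtain ⟨t, ht, rfl⟩ := hbij.surjOn (mem_Ici.2 (le_of_lt (mem_Ioi.1 hu)))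
      refine ⟨t, ?_, rfl⟩
      rcases eq_or_lt_of_le (mem_Ici.1 ht) with h0 | h0
      · exfalso; rw [← h0, hΨ0] at hu; exact lt_irrefl 0 (mem_Ioi.1 hu)
      · exact h0
  have hderiv_nonneg : ∀ t ∈ Ioi (0:ℝ), 0 ≤ deriv Ψ t := by
    intro t ht
    have h1 : Filter.Tendsto (slope Ψ t) (nhdsWithin t (Ioi t)) (nhds (deriv Ψ t)) := by
      have h2 := (hΨd t).hasDerivWithinAt (s := Ioi t)
      rw [hasDerivWithinAt_iff_tendsto_slope] at h2
      rwa [show Ioi t \ {t} = Ioi t from diff_singleton_eq_self (by simp)] at h2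
    refine ge_of_tendsto h1 ?_
    filter_upwards [self_mem_nhdsWithin] with y hy
    have hty : Ψ t ≤ Ψ y := hmonoOn (mem_Ici.2 (le_of_lt (mem_Ioi.1 ht))) (mem_Ici.2 (le_of_lt (lt_trans (mem_Ioi.1 ht) (mem_Ioi.1 hy)))) (le_of_lt (mem_Ioi.1 hy))
    rw [slope_def_field]
    exact div_nonneg (sub_nonneg.2 hty) (sub_nonneg.2 (le_of_lt hy))
  have hinvmono : StrictMonoOn Ψinv (Ici 0) := by
    intro u hu u' hu' huu
    by_contra h
    push_neg at h
    have h2 := hmonoOn (hinv0 u' hu') (hinv0 u hu) h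
    rw [hinv' u hu, hinv' u' hu'] at h2
    exact absurd h2 (not_le.2 huu)
  have hinv00 : Ψinv 0 = 0 := by
    have h := hinv 0 le_rfl
    rwa [hΨ0] at h
  have hinvcont : ContinuousOn Ψinv (Ici 0) := by
    intro u hu
    have hsurjR : SurjOn Ψinv (Ici 0) (Ioi (Ψinv u)) := by
      intro r hr
      have hr0 : 0 < r := lt_of_le_of_lt (hinv0 u hu) hr
      exact ⟨Ψ r, hΨnonneg r hr0.le, hinv r hr0.le⟩
    rcases eq_or_lt_of_le (mem_Ici.1 hu) with h0 | h0
    · subst h0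
      exact hinvmono.continuousWithinAt_right_of_surjOn self_mem_nhdsWithin hsurjR
    · have htpos : 0 < Ψinv u := by
        rcases lt_or_eq_of_le (hinv0 u h0.le) with h | h
        · exact h
        · exfalso
          have : Ψ (Ψinv u) = u := hinv' u h0.le
          rw [← h, hΨ0] at this
          exact absurd this.symm (ne_of_gt h0)
      have hiR : ContinuousWithinAt Ψinv (Ici u) u :=
        hinvmono.continuousWithinAt_right_of_surjOn
          (mem_nhdsWithin_of_mem_nhds (Ici_mem_nhds h0)) hsurjR
      have hiL : ContinuousWithinAt Ψinv (Iic u) u := by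
        apply hinvmono.continuousWithinAt_left_of_exists_between
          (mem_nhdsWithin_of_mem_nhds (Ici_mem_nhds h0))
        intro r hr
        by_cases hr0 : r ≤ 0
        · exact ⟨0, self_mem_Ici, by rw [hinv00]; exact ⟨hr0, htpos⟩⟩
        · push_neg at hr0
          refine ⟨Ψ r, hΨnonneg r hr0.le, ?_⟩
          rw [hinv r hr0.le]
          exact ⟨le_rfl, hr⟩
      have hcu := hiL.union hiR
      exact hcu.mono (fun x _ => by rcases le_total x u with h | h
                                    · exact Or.inl h
                                    · exact Or.inr h)
  set F : ℝ → ℝ := fun u => f (Ψinv u) with hFdef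
  set G : ℝ → ℝ := fun u => g (Ψinv u) with hGdef
  have hFcont : ContinuousOn F (Ici 0) := hf.comp hinvcont (fun u hu => hinv0 u hu)
  have hGcont : ContinuousOn G (Ici 0) := hg.comp hinvcont (fun u hu => hinv0 u hu)
  have hFb : ∀ u ≥ (0:ℝ), |F u| ≤ M * exp (c*u) := by
    intro u hu
    have h1 := hfbound (Ψinv u) (hinv0 u hu)
    rwa [hinv' u hu] at h1
  have hGb : ∀ u ≥ (0:ℝ), |G u| ≤ M * exp (c*u) := by
    intro u hu
    have h1 := hgbound (Ψinv u) (hinv0 u hu)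
    rwa [hinv' u hu] at h1
  have key : ∀ H : ℝ → ℝ, (∫ t in Ioi (0:ℝ), exp (-s * Ψ t) * deriv Ψ t * H (Ψ t)) =
      ∫ u in Ioi (0:ℝ), exp (-s*u) * H u := by
    intro H
    have h1 := integral_image_eq_integral_abs_deriv_smul measurableSet_Ioi
      (fun t (_ : t ∈ Ioi (0:ℝ)) => (hΨd t).hasDerivWithinAt)
      (hΨmono.injOn.mono Ioi_subset_Ici_self) (fun u => exp (-s*u) * H u)
    rw [himg] at h1
    rw [h1]
    apply setIntegral_congr_fun measurableSet_Ioi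
    intro t ht
    simp only [smul_eq_mul]
    rw [abs_of_nonneg (hderiv_nonneg t ht)]
    ring
  set C : ℝ → ℝ := fun u => ∫ v in (0:ℝ)..u, F (u - v) * G v with hCdef
  have hconv : ∀ t ≥ (0:ℝ), psiConv Ψ Ψinv f g t = C (Ψ t) := by
    intro t ht
    have hIm : Ψ '' (uIcc 0 t) ⊆ Icc 0 (Ψ t) := by
      rintro _ ⟨τ, hτ, rfl⟩
      rw [uIcc_of_le ht] at hτ
      exact ⟨hΨnonneg τ hτ.1, hmonoOn hτ.1 ht hτ.2⟩
    have step : ∀ τ ∈ uIcc (0:ℝ) t, f (Ψinv (Ψ t - Ψ τ)) * g τ * deriv Ψ τ =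
        deriv Ψ τ • ((fun v => F (Ψ t - v) * G v) ∘ Ψ) τ := by
      intro τ hτ
      rw [uIcc_of_le ht] at hτ
      simp only [comp_apply, smul_eq_mul, hFdef, hGdef]
      rw [hinv τ hτ.1]
      ring
    have hgcont : ContinuousOn (fun v => F (Ψ t - v) * G v) (Ψ '' uIcc 0 t) := by
      apply ContinuousOn.mono _ hIm
      apply ContinuousOn.mul
      · exact hFcont.comp (continuous_const.sub continuous_id).continuousOn
          (fun v hv => sub_nonneg.2 hv.2)
      · exact hGcont.mono (fun v hv => hv.1)
    show (∫ τ in (0:ℝ)..t, f (Ψinv (Ψ t - Ψ τ)) * g τ * deriv Ψ τ) = C (Ψ t)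
    rw [intervalIntegral.integral_congr step,
      intervalIntegral.integral_comp_smul_deriv' (fun x _ => hΨd x) hΨ'cont.continuousOn hgcont,
      hΨ0]
  have e1 : psiLaplace Ψ (fun t => psiConv Ψ Ψinv f g t) s =
      ∫ u in Ioi (0:ℝ), exp (-s*u) * C u := by
    rw [← key C]
    apply setIntegral_congr_fun measurableSet_Ioi
    intro t ht
    show exp (-s * Ψ t) * deriv Ψ t * psiConv Ψ Ψinv f g t =
      exp (-s * Ψ t) * deriv Ψ t * C (Ψ t)
    rw [hconv t (le_of_lt ht)]
  have e2 : psiLaplace Ψ f s = ∫ u in Ioi (0:ℝ), exp (-s*u) * F u := by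
    rw [← key F]
    apply setIntegral_congr_fun measurableSet_Ioi
    intro t ht
    simp only [hFdef]
    rw [hinv t (le_of_lt ht)]
  have e3 : psiLaplace Ψ g s = ∫ u in Ioi (0:ℝ), exp (-s*u) * G u := by
    rw [← key G]
    apply setIntegral_congr_fun measurableSet_Ioi
    intro t ht
    simp only [hGdef]
    rw [hinv t (le_of_lt ht)]
  rw [e1, e2, e3]
  exact laplace_conv F G c M s hc hM hs hFcont hGcont hFb hGb
end

section
/- Let 0 < μ < 1, A an n×n real matrix, g : [0,∞) → ℝⁿ continuous and Ψ-exponentially bounded (‖g(t)‖_∞ ≤ M e^{c·Ψ(t)}), and y the unique continuous solution of the Ψ-Caputo system ᶜ₀D^μ_{Ψ(t)} y(t) = A y(t) + g(t), y(0) = η. Then y is Ψ-exponentially bounded: there exists a constant C' > 0 such that ‖y(t)‖_∞ ≤ C' e^{(‖A‖_∞^{1/μ} + c)·Ψ(t)} for all t ≥ 0. -/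
open MeasureTheory Real Set intervalIntegral Filter Topology

lemma deriv_nonneg_of_strictMonoOn {Ψ : ℝ → ℝ} (hΨC1 : ContDiff ℝ 1 Ψ)
    (hΨmono : StrictMonoOn Ψ (Ici 0)) {τ : ℝ} (hτ : 0 ≤ τ) : 0 ≤ deriv Ψ τ := by
  have hd : HasDerivAt Ψ (deriv Ψ τ) τ :=
    ((hΨC1.differentiable one_ne_zero) τ).hasDerivAt
  have hslope : Tendsto (slope Ψ τ) (𝓝[>] τ) (𝓝 (deriv Ψ τ)) :=
    (hasDerivAt_iff_tendsto_slope.mp hd).mono_left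
      (nhdsWithin_mono _ (fun x hx => ne_of_gt hx))
  refine ge_of_tendsto hslope ?_
  filter_upwards [self_mem_nhdsWithin] with x hx
  have hx' : τ < x := hx
  have := hΨmono.monotoneOn hτ (le_of_lt (lt_of_le_of_lt hτ hx')) hx'.le
  rw [slope_def_field]
  exact div_nonneg (by linarith) (by linarith)

lemma key_kernel_estimate {Ψ : ℝ → ℝ} {μ b : ℝ} (hΨC1 : ContDiff ℝ 1 Ψ)
    (hΨmono : StrictMonoOn Ψ (Ici 0)) (hΨ0 : Ψ 0 = 0)
    (hμ0 : 0 < μ) (hμ1 : μ < 1) (hb : 0 < b) {t : ℝ} (ht : 0 ≤ t) :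
    IntegrableOn (fun τ => (Ψ t - Ψ τ) ^ (μ - 1) * deriv Ψ τ * Real.exp (b * Ψ τ)) (Ioc 0 t) ∧
    ∫ τ in Ioc 0 t, (Ψ t - Ψ τ) ^ (μ - 1) * deriv Ψ τ * Real.exp (b * Ψ τ) ≤
      Real.Gamma μ * b ^ (-μ) * Real.exp (b * Ψ t) := by
  rcases eq_or_lt_of_le ht with rfl | ht0
  · simp only [Ioc_self, integrableOn_empty, Measure.restrict_empty, integral_zero_measure,
      true_and]
    positivity
  set T := Ψ t with hT
  have hT0 : 0 < T := by
    have := hΨmono (self_mem_Ici) (mem_Ici.mpr ht) ht0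
    simpa [hΨ0] using this
  set G : ℝ → ℝ := fun s => (T - s) ^ (μ - 1) * Real.exp (b * s) with hG
  -- integrability of G on (0, T]
  have hGint : IntegrableOn G (Ioc 0 T) := by
    have h1 : IntervalIntegrable (fun s => (T - s) ^ (μ - 1)) volume 0 T := by
      have h0 : IntervalIntegrable (fun x => (T - x) ^ (μ - 1)) volume T 0 := by
        simpa using (intervalIntegrable_rpow' (a := 0) (b := T)
          (by linarith : (-1:ℝ) < μ - 1)).comp_sub_left T
      exact h0.symm
    have h2 : IntervalIntegrable G volume 0 T :=
      h1.mul_continuousOn (Continuous.continuousOn (by continuity))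
    exact (intervalIntegrable_iff_integrableOn_Ioc_of_le hT0.le).1 h2
  -- image of (0, t] under Ψ
  have himg : Ψ '' Ioc 0 t = Ioc 0 T := by
    apply Subset.antisymm
    · rintro s ⟨τ, hτ, rfl⟩
      exact ⟨by simpa [hΨ0] using hΨmono self_mem_Ici (mem_Ici.mpr (le_of_lt hτ.1)) hτ.1,
        hΨmono.monotoneOn (mem_Ici.mpr hτ.1.le) (mem_Ici.mpr ht) hτ.2⟩
    · have := intermediate_value_Ioc ht (hΨC1.continuous.continuousOn (s := Icc 0 t))
      rw [hΨ0] at this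
      exact this
  have hHasD : ∀ τ ∈ Ioc (0:ℝ) t, HasDerivWithinAt Ψ (deriv Ψ τ) (Ioc 0 t) τ :=
    fun τ _ => (((hΨC1.differentiable one_ne_zero) τ).hasDerivAt).hasDerivWithinAt
  have hinj : InjOn Ψ (Ioc 0 t) :=
    hΨmono.injOn.mono (fun x hx => le_of_lt hx.1)
  have hiff := integrableOn_image_iff_integrableOn_abs_deriv_smul measurableSet_Ioc hHasD hinj G
  rw [himg] at hiff
  have hint2 : IntegrableOn (fun τ => |deriv Ψ τ| • G (Ψ τ)) (Ioc 0 t) := hiff.1 hGint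
  have heqOn : ∀ τ ∈ Ioc (0:ℝ) t,
      (Ψ t - Ψ τ) ^ (μ - 1) * deriv Ψ τ * Real.exp (b * Ψ τ) = |deriv Ψ τ| • G (Ψ τ) := by
    intro τ hτ
    have hd := deriv_nonneg_of_strictMonoOn hΨC1 hΨmono hτ.1.le
    rw [abs_of_nonneg hd, smul_eq_mul, hG]
    ring
  have hintmain : IntegrableOn
      (fun τ => (Ψ t - Ψ τ) ^ (μ - 1) * deriv Ψ τ * Real.exp (b * Ψ τ)) (Ioc 0 t) := by
    exact hint2.congr_fun (fun τ hτ => (heqOn τ hτ).symm) measurableSet_Ioc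
  refine ⟨hintmain, ?_⟩
  have heq1 : ∫ τ in Ioc 0 t, (Ψ t - Ψ τ) ^ (μ - 1) * deriv Ψ τ * Real.exp (b * Ψ τ) =
      ∫ s in Ioc 0 T, G s := by
    rw [setIntegral_congr_fun measurableSet_Ioc heqOn, ← himg,
      integral_image_eq_integral_abs_deriv_smul measurableSet_Ioc hHasD hinj G]
  rw [heq1]
  -- now estimate ∫_{Ioc 0 T} G
  have heq2 : ∫ s in Ioc 0 T, G s = ∫ s in (0:ℝ)..T, G s := (integral_of_le hT0.le).symm
  have heq3 : ∫ s in (0:ℝ)..T, G s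
      = ∫ r in (0:ℝ)..T, Real.exp (b*T) * (r ^ (μ - 1) * Real.exp (-(b * r))) := by
    have := integral_comp_sub_left (a := 0) (b := T)
      (fun r => Real.exp (b*T) * (r ^ (μ - 1) * Real.exp (-(b * r)))) T
    simp only [sub_self, sub_zero] at this
    rw [← this]
    apply intervalIntegral.integral_congr
    intro x hx
    beta_reduce
    rw [show Real.exp (b*T) * ((T - x) ^ (μ - 1) * Real.exp (-(b * (T - x)))) =
      (T - x) ^ (μ - 1) * (Real.exp (b*T) * Real.exp (-(b * (T - x)))) from by ring,
      ← Real.exp_add]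
    simp only [hG]
    ring_nf
  rw [heq2, heq3, intervalIntegral.integral_const_mul]
  have heq4 : ∫ r in (0:ℝ)..T, r ^ (μ - 1) * Real.exp (-(b * r)) ≤
      Real.Gamma μ * b ^ (-μ) := by
    rw [intervalIntegral.integral_of_le hT0.le]
    have hIoi : IntegrableOn (fun x:ℝ => x ^ (μ-1) * Real.exp (-(b*x))) (Ioi 0) := by
      have := integrableOn_rpow_mul_exp_neg_mul_rpow (by linarith : (-1:ℝ) < μ - 1) (zero_lt_one : (0:ℝ) < 1) hb
      simpa [Real.rpow_one, neg_mul] using this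
    have hnn : 0 ≤ᵐ[volume.restrict (Ioi (0:ℝ))] fun x => x ^ (μ-1) * Real.exp (-(b*x)) := by
      filter_upwards [ae_restrict_mem measurableSet_Ioi] with x hx
      have : (0:ℝ) < x := hx
      positivity
    have hmono := setIntegral_mono_set hIoi hnn (HasSubset.Subset.eventuallyLE (Ioc_subset_Ioi_self (b := (0:ℝ)) (a := T)))
    calc ∫ r in Ioc (0:ℝ) T, r ^ (μ - 1) * Real.exp (-(b * r)) ≤
        ∫ r in Ioi (0:ℝ), r ^ (μ - 1) * Real.exp (-(b * r)) := hmono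
      _ = (1/b) ^ μ * Real.Gamma μ := Real.integral_rpow_mul_exp_neg_mul_Ioi hμ0 hb
      _ = Real.Gamma μ * b ^ (-μ) := by
          rw [one_div, Real.inv_rpow hb.le, ← Real.rpow_neg hb.le, mul_comm]
  calc Real.exp (b*T) * ∫ r in (0:ℝ)..T, r ^ (μ - 1) * Real.exp (-(b * r))
      ≤ Real.exp (b*T) * (Real.Gamma μ * b ^ (-μ)) := by
        exact mul_le_mul_of_nonneg_left heq4 (Real.exp_nonneg _)
    _ = Real.Gamma μ * b ^ (-μ) * Real.exp (b * T) := by ring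

lemma measurable_rpow_const_aux (p : ℝ) : Measurable (fun s : ℝ => s ^ p) := by
  measurability

lemma norm_mulVec_le_aux {n : ℕ} (A : Matrix (Fin n) (Fin n) ℝ) {K : ℝ}
    (hK : IsGreatest (range fun i => ∑ j, |A i j|) K) (v : Fin n → ℝ) :
    ‖A.mulVec v‖ ≤ K * ‖v‖ := by
  obtain ⟨i0, hi0⟩ := hK.1
  have hK0 : 0 ≤ K := hi0 ▸ Finset.sum_nonneg (fun j _ => abs_nonneg _)
  refine (pi_norm_le_iff_of_nonneg (mul_nonneg hK0 (norm_nonneg v))).2 (fun i => ?_)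
  calc ‖A.mulVec v i‖ = |∑ j, A i j * v j| := by
        simp [Matrix.mulVec, dotProduct, Real.norm_eq_abs]
    _ ≤ ∑ j, |A i j * v j| := Finset.abs_sum_le_sum_abs _ _
    _ ≤ ∑ j, |A i j| * ‖v‖ := Finset.sum_le_sum (fun j _ => by
        rw [abs_mul]
        exact mul_le_mul_of_nonneg_left ((Real.norm_eq_abs (v j)) ▸ norm_le_pi_norm v j)
          (abs_nonneg _))
    _ = (∑ j, |A i j|) * ‖v‖ := (Finset.sum_mul _ _ _).symm
    _ ≤ K * ‖v‖ := mul_le_mul_of_nonneg_right (hK.2 (mem_range_self i)) (norm_nonneg v)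

set_option maxHeartbeats 1000000 in
theorem psi_caputo_system_solution_exponentially_bounded
    (n : ℕ) (Ψ : ℝ → ℝ) (μ c M K : ℝ)
    (A : Matrix (Fin n) (Fin n) ℝ)
    (g y : ℝ → (Fin n → ℝ)) (η : Fin n → ℝ)
    (hΨC1 : ContDiff ℝ 1 Ψ)
    (hΨmono : StrictMonoOn Ψ (Ici 0))
    (hΨnonneg : ∀ t ≥ (0:ℝ), 0 ≤ Ψ t)
    (hΨ0 : Ψ 0 = 0)
    (hμ0 : 0 < μ) (hμ1 : μ < 1)
    (hc : 0 < c) (hM : 0 < M)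
    (hg : ContinuousOn g (Ici 0))
    (hgbound : ∀ t ≥ (0:ℝ), ‖g t‖ ≤ M * Real.exp (c * Ψ t))
    (hK : IsGreatest (range fun i => ∑ j, |A i j|) K)
    (hy : ContinuousOn y (Ici 0))
    (hy0 : y 0 = η)
    -- y is the (unique) continuous solution, i.e. it satisfies the equivalent
    -- Volterra integral equation:
    (hyeq : ∀ t ≥ (0:ℝ), y t = η + (1 / Real.Gamma μ) •
      ∫ τ in (0:ℝ)..t, ((Ψ t - Ψ τ) ^ (μ - 1) * deriv Ψ τ) • (A.mulVec (y τ) + g τ))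
    (huniq : ∀ z : ℝ → (Fin n → ℝ), ContinuousOn z (Ici 0) →
      (∀ t ≥ (0:ℝ), z t = η + (1 / Real.Gamma μ) •
        ∫ τ in (0:ℝ)..t, ((Ψ t - Ψ τ) ^ (μ - 1) * deriv Ψ τ) • (A.mulVec (z τ) + g τ)) →
      ∀ t ≥ (0:ℝ), z t = y t) :
    ∃ C' > (0:ℝ), ∀ t ≥ (0:ℝ),
      ‖y t‖ ≤ C' * Real.exp ((K ^ (1 / μ) + c) * Ψ t) := by
  -- basic constants
  obtain ⟨i0, hi0⟩ := hK.1
  have hK0 : 0 ≤ K := hi0 ▸ Finset.sum_nonneg (fun j _ => abs_nonneg _)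
  set b : ℝ := K ^ (1 / μ) + c with hbdef
  have hKr0 : 0 ≤ K ^ (1 / μ) := Real.rpow_nonneg hK0 _
  have hbpos : 0 < b := by positivity
  have hcb : c ≤ b := by simp only [hbdef]; linarith
  have hΓpos : 0 < Real.Gamma μ := Real.Gamma_pos_of_pos hμ0
  have hbμpos : 0 < b ^ μ := Real.rpow_pos_of_pos hbpos μ
  have hKb : K < b ^ μ := by
    have h1 : (K ^ (1 / μ)) ^ μ = K := by
      rw [← Real.rpow_mul hK0, one_div, inv_mul_cancel₀ hμ0.ne', Real.rpow_one]
    rcases eq_or_lt_of_le hKr0 with h0 | hpos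
    · rw [← h1, ← h0]
      rw [Real.zero_rpow hμ0.ne']
      exact hbμpos
    · calc K = (K ^ (1 / μ)) ^ μ := h1.symm
        _ < b ^ μ := Real.rpow_lt_rpow hKr0 (by simp only [hbdef]; linarith) hμ0
  have hbnegμ : (0:ℝ) < b ^ (-μ) := Real.rpow_pos_of_pos hbpos _
  have hθ : K * b ^ (-μ) < 1 := by
    rw [Real.rpow_neg hbpos.le, ← div_eq_mul_inv, div_lt_one hbμpos]
    exact hKb
  have hθ0 : 0 ≤ K * b ^ (-μ) := mul_nonneg hK0 hbnegμ.le
  set C' : ℝ := (‖η‖ + M * b ^ (-μ) + 1) / (1 - K * b ^ (-μ)) with hC'def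
  have hden : 0 < 1 - K * b ^ (-μ) := by linarith
  have hnum : 0 < ‖η‖ + M * b ^ (-μ) + 1 := by positivity
  have hC'pos : 0 < C' := div_pos hnum hden
  have hident : C' * (1 - K * b ^ (-μ)) = ‖η‖ + M * b ^ (-μ) + 1 :=
    div_mul_cancel₀ _ hden.ne'
  have hC'big : ‖η‖ + M * b ^ (-μ) + 1 ≤ C' := by
    rw [hC'def, le_div_iff₀ hden]
    nlinarith [hnum]
  -- continuity of w
  have hAcont : ContinuousOn (fun τ => A.mulVec (y τ)) (Ici 0) := by
    have h := A.mulVecLin.continuous_of_finiteDimensional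
    have := h.comp_continuousOn hy
    simpa [Function.comp_def, Matrix.mulVecLin_apply] using this
  have hw_cont : ContinuousOn (fun τ => A.mulVec (y τ) + g τ) (Ici 0) := hAcont.add hg
  have hΨcont : Continuous Ψ := hΨC1.continuous
  have hΨ'cont : Continuous (deriv Ψ) := hΨC1.continuous_deriv le_rfl
  -- the key self-improving estimate
  have key : ∀ t₀ : ℝ, 0 ≤ t₀ →
      (∀ τ, 0 ≤ τ → τ < t₀ → ‖y τ‖ ≤ C' * Real.exp (b * Ψ τ)) →
      ‖y t₀‖ ≤ (C' - 1) * Real.exp (b * Ψ t₀) := by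
    intro t₀ ht₀ hPlt
    obtain ⟨hker_int, hker_bound⟩ :=
      key_kernel_estimate hΨC1 hΨmono hΨ0 hμ0 hμ1 hbpos ht₀
    set F : ℝ → (Fin n → ℝ) :=
      fun τ => ((Ψ t₀ - Ψ τ) ^ (μ - 1) * deriv Ψ τ) • (A.mulVec (y τ) + g τ) with hFdef
    -- pointwise bound
    have hptw : ∀ τ ∈ Ioc (0:ℝ) t₀, ‖F τ‖ ≤
        (K * C' + M) * ((Ψ t₀ - Ψ τ) ^ (μ - 1) * deriv Ψ τ * Real.exp (b * Ψ τ)) := by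
      intro τ hτ
      have hτ0 : 0 ≤ τ := hτ.1.le
      have hd := deriv_nonneg_of_strictMonoOn hΨC1 hΨmono hτ0
      have hΨτ0 : 0 ≤ Ψ τ := hΨnonneg τ hτ0
      rcases eq_or_lt_of_le hτ.2 with rfl | hlt
      · simp only [hFdef, sub_self, Real.zero_rpow (by linarith : μ - 1 ≠ 0), zero_mul,
          zero_smul, norm_zero, mul_zero]
        exact le_refl 0
      · have hΨle : Ψ τ ≤ Ψ t₀ :=
          (hΨmono.monotoneOn (mem_Ici.mpr hτ0) (mem_Ici.mpr ht₀) hlt.le)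
        have hknn : 0 ≤ (Ψ t₀ - Ψ τ) ^ (μ - 1) * deriv Ψ τ :=
          mul_nonneg (Real.rpow_nonneg (by linarith) _) hd
        have hwb : ‖A.mulVec (y τ) + g τ‖ ≤ (K * C' + M) * Real.exp (b * Ψ τ) := by
          have h1 : ‖A.mulVec (y τ)‖ ≤ K * ‖y τ‖ := norm_mulVec_le_aux A hK (y τ)
          have h2 : ‖y τ‖ ≤ C' * Real.exp (b * Ψ τ) := hPlt τ hτ0 hlt
          have h3 : ‖g τ‖ ≤ M * Real.exp (c * Ψ τ) := hgbound τ hτ0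
          have h4 : Real.exp (c * Ψ τ) ≤ Real.exp (b * Ψ τ) :=
            Real.exp_le_exp.mpr (mul_le_mul_of_nonneg_right hcb hΨτ0)
          calc ‖A.mulVec (y τ) + g τ‖ ≤ ‖A.mulVec (y τ)‖ + ‖g τ‖ := norm_add_le _ _
            _ ≤ K * (C' * Real.exp (b * Ψ τ)) + M * Real.exp (b * Ψ τ) := by
                have := mul_le_mul_of_nonneg_left h2 hK0
                nlinarith [Real.exp_pos (c * Ψ τ)]
            _ = (K * C' + M) * Real.exp (b * Ψ τ) := by ring
        calc ‖F τ‖ = ((Ψ t₀ - Ψ τ) ^ (μ - 1) * deriv Ψ τ) * ‖A.mulVec (y τ) + g τ‖ := by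
              rw [hFdef]
              simp only [norm_smul, Real.norm_eq_abs, abs_of_nonneg hknn]
          _ ≤ ((Ψ t₀ - Ψ τ) ^ (μ - 1) * deriv Ψ τ) * ((K * C' + M) * Real.exp (b * Ψ τ)) :=
              mul_le_mul_of_nonneg_left hwb hknn
          _ = (K * C' + M) * ((Ψ t₀ - Ψ τ) ^ (μ - 1) * deriv Ψ τ * Real.exp (b * Ψ τ)) := by
              ring
    -- measurability / integrability
    have hKCM : (0:ℝ) ≤ K * C' + M := by nlinarith
    have hRHSint : IntegrableOn
        (fun τ => (K * C' + M) * ((Ψ t₀ - Ψ τ) ^ (μ - 1) * deriv Ψ τ * Real.exp (b * Ψ τ)))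
        (Ioc 0 t₀) := hker_int.const_mul _
    have hkmeas : Measurable (fun τ => (Ψ t₀ - Ψ τ) ^ (μ - 1) * deriv Ψ τ) :=
      ((measurable_rpow_const_aux (μ - 1)).comp
        (measurable_const.sub hΨcont.measurable)).mul hΨ'cont.measurable
    have hwmeas : AEStronglyMeasurable (fun τ => A.mulVec (y τ) + g τ)
        (volume.restrict (Ioc 0 t₀)) :=
      (hw_cont.mono (fun x hx => hx.1.le)).aestronglyMeasurable measurableSet_Ioc
    have hFmeas : AEStronglyMeasurable F (volume.restrict (Ioc 0 t₀)) :=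
      (hkmeas.aemeasurable.aestronglyMeasurable).smul hwmeas
    have hFnormint : IntegrableOn (fun τ => ‖F τ‖) (Ioc 0 t₀) := by
      refine Integrable.mono hRHSint hFmeas.norm ?_
      filter_upwards [ae_restrict_mem measurableSet_Ioc] with τ hτ
      rw [norm_norm, Real.norm_eq_abs]
      refine le_trans (hptw τ hτ) (le_abs_self _)
    -- chain of inequalities
    have hstart : ‖y t₀‖ ≤ ‖η‖ + (1 / Real.Gamma μ) * ‖∫ τ in Ioc (0:ℝ) t₀, F τ‖ := by
      rw [hyeq t₀ ht₀, intervalIntegral.integral_of_le ht₀]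
      refine le_trans (norm_add_le _ _) ?_
      rw [norm_smul, Real.norm_eq_abs, abs_of_pos (by positivity)]
    have hnormint : ‖∫ τ in Ioc (0:ℝ) t₀, F τ‖ ≤ ∫ τ in Ioc (0:ℝ) t₀, ‖F τ‖ :=
      norm_integral_le_integral_norm F
    have hmono2 : ∫ τ in Ioc (0:ℝ) t₀, ‖F τ‖ ≤
        ∫ τ in Ioc (0:ℝ) t₀,
          (K * C' + M) * ((Ψ t₀ - Ψ τ) ^ (μ - 1) * deriv Ψ τ * Real.exp (b * Ψ τ)) :=
      setIntegral_mono_on hFnormint hRHSint measurableSet_Ioc hptw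
    have hconst : ∫ τ in Ioc (0:ℝ) t₀,
          (K * C' + M) * ((Ψ t₀ - Ψ τ) ^ (μ - 1) * deriv Ψ τ * Real.exp (b * Ψ τ))
        = (K * C' + M) *
          ∫ τ in Ioc (0:ℝ) t₀, (Ψ t₀ - Ψ τ) ^ (μ - 1) * deriv Ψ τ * Real.exp (b * Ψ τ) :=
      integral_const_mul _ _
    have hbig : ‖y t₀‖ ≤ ‖η‖ +
        (1 / Real.Gamma μ) * ((K * C' + M) * (Real.Gamma μ * b ^ (-μ) * Real.exp (b * Ψ t₀))) := by
      have h5 : (K * C' + M) *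
          (∫ τ in Ioc (0:ℝ) t₀, (Ψ t₀ - Ψ τ) ^ (μ - 1) * deriv Ψ τ * Real.exp (b * Ψ τ))
          ≤ (K * C' + M) * (Real.Gamma μ * b ^ (-μ) * Real.exp (b * Ψ t₀)) :=
        mul_le_mul_of_nonneg_left hker_bound hKCM
      have h6 : ‖∫ τ in Ioc (0:ℝ) t₀, F τ‖ ≤
          (K * C' + M) * (Real.Gamma μ * b ^ (-μ) * Real.exp (b * Ψ t₀)) := by
        refine le_trans hnormint (le_trans hmono2 ?_)
        rw [hconst]; exact h5
      refine le_trans hstart ?_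
      have hg0 : (0:ℝ) ≤ 1 / Real.Gamma μ := by positivity
      exact add_le_add le_rfl (mul_le_mul_of_nonneg_left h6 hg0)
    have hsimp : ‖η‖ + (1 / Real.Gamma μ) *
        ((K * C' + M) * (Real.Gamma μ * b ^ (-μ) * Real.exp (b * Ψ t₀)))
        = ‖η‖ + (K * C' + M) * b ^ (-μ) * Real.exp (b * Ψ t₀) := by
      field_simp
    rw [hsimp] at hbig
    -- final algebra
    have hexp1 : 1 ≤ Real.exp (b * Ψ t₀) :=
      Real.one_le_exp (mul_nonneg hbpos.le (hΨnonneg t₀ ht₀))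
    have hkey2 : ‖η‖ + (K * C' + M) * b ^ (-μ) = C' - 1 := by nlinarith [hident]
    have hXnn : 0 ≤ (K * C' + M) * b ^ (-μ) := mul_nonneg hKCM hbnegμ.le
    calc ‖y t₀‖ ≤ ‖η‖ + (K * C' + M) * b ^ (-μ) * Real.exp (b * Ψ t₀) := hbig
      _ ≤ (‖η‖ + (K * C' + M) * b ^ (-μ)) * Real.exp (b * Ψ t₀) := by
          nlinarith [norm_nonneg η]
      _ = (C' - 1) * Real.exp (b * Ψ t₀) := by rw [hkey2]
  -- bootstrap / continuity argument
  refine ⟨C', hC'pos, ?_⟩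
  by_contra hcon
  push_neg at hcon
  obtain ⟨t1, ht1, hlt1⟩ := hcon
  set B : Set ℝ := {t : ℝ | 0 ≤ t ∧ C' * Real.exp (b * Ψ t) < ‖y t‖} with hBdef
  have hBne : B.Nonempty := ⟨t1, ht1, hlt1⟩
  have hbdd : BddBelow B := ⟨0, fun x hx => hx.1⟩
  set t₀ : ℝ := sInf B with ht₀def
  have ht₀0 : 0 ≤ t₀ := le_csInf hBne (fun x hx => hx.1)
  have hPlt : ∀ τ, 0 ≤ τ → τ < t₀ → ‖y τ‖ ≤ C' * Real.exp (b * Ψ τ) := by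
    intro τ hτ0 hτlt
    by_contra hcon2
    push_neg at hcon2
    exact absurd (csInf_le hbdd ⟨hτ0, hcon2⟩) (not_le.mpr hτlt)
  have hE := key t₀ ht₀0 hPlt
  have hcl : t₀ ∈ closure B := csInf_mem_closure hBne hbdd
  haveI : (𝓝[B] t₀).NeBot := mem_closure_iff_nhdsWithin_neBot.mp hcl
  have hf_cont : ContinuousOn (fun τ => ‖y τ‖ - C' * Real.exp (b * Ψ τ)) (Ici 0) := by
    refine ContinuousOn.sub hy.norm ?_
    exact (continuous_const.mul (Real.continuous_exp.comp
      (continuous_const.mul hΨcont))).continuousOn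
  have hcwa : Tendsto (fun τ => ‖y τ‖ - C' * Real.exp (b * Ψ τ)) (𝓝[B] t₀)
      (𝓝 (‖y t₀‖ - C' * Real.exp (b * Ψ t₀))) :=
    (hf_cont t₀ (mem_Ici.mpr ht₀0)).mono (fun x hx => hx.1)
  have hge : 0 ≤ ‖y t₀‖ - C' * Real.exp (b * Ψ t₀) := by
    refine ge_of_tendsto hcwa ?_
    filter_upwards [self_mem_nhdsWithin] with x hx
    exact le_of_lt (sub_pos.mpr hx.2)
  have hexppos : 0 < Real.exp (b * Ψ t₀) := Real.exp_pos _
  nlinarith [hE, hge, hexppos]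
end
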